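/- arXiv:1901.07170 — 3 statements merged into one kernel-verified Lean document; each statement's English description precedes it below -/
import Mathlib

section
/- For every first-order grammar G = (N, Σ, R) and all numbers n, s, g ∈ ℕ, there exists a unique full (n,s,g)-candidate basis B_{n,s,g} for non-equivalence. -/
open scoped ENat

noncomputable section

namespace FOG

/-- A node label: a nonterminal or a variable (variable `x_{i+1}` has index `i`). -/
abbrev Sym (Nt : Type) := Nt ⊕ ℕ

/-- A (pre)term over the nonterminals `Nt` and the variables, given by its
(partial) labelling of tree positions; possibly infinite terms are allowed. -/
abbrev PreTerm (Nt : Type) := List ℕ → Option (Sym Nt)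

variable {Nt : Type}

/-- the term consisting of the single variable `x_{i+1}` -/
def varPre (i : ℕ) : PreTerm Nt := fun p => if p = [] then some (Sum.inr i) else none

/-- the subterm of `E` rooted at position `p` -/
def subAt (E : PreTerm Nt) (p : List ℕ) : PreTerm Nt := fun q => E (p ++ q)

/-- the positions (nodes) of a term -/
def positions (E : PreTerm Nt) : Set (List ℕ) := {p | E p ≠ none}

/-- the set of subterms of a term -/
def subterms (E : PreTerm Nt) : Set (PreTerm Nt) := {F | ∃ p, E p ≠ none ∧ F = subAt E p}

/-- the size `|E|` of a term: its number of distinct subterms -/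
def size1 (E : PreTerm Nt) : ℕ := (subterms E).ncard

/-- `|E,F|`: the number of distinct subterms of `E` and `F` together -/
def size2 (E F : PreTerm Nt) : ℕ := (subterms E ∪ subterms F).ncard

/-- the set of (indices of) variables occurring in a term -/
def varsOf (E : PreTerm Nt) : Set ℕ := {i | ∃ p, E p = some (Sum.inr i)}

/-- `vars(E,F)` -/
def vars2 (E F : PreTerm Nt) : Set ℕ := varsOf E ∪ varsOf F

/-- the number of distinct subterms of `E` whose root label is a nonterminal -/
def ntcount (E : PreTerm Nt) : ℕ :=
  {F | F ∈ subterms E ∧ ∃ A : Nt, F [] = some (Sum.inl A)}.ncard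

/-- the height of a (finite) term -/
def heightP (E : PreTerm Nt) : ℕ := sSup {n | ∃ p ∈ positions E, p.length = n}

/-- Well-formedness: the root is labelled, and a child position `p ++ [i]` is
labelled iff `p` carries a nonterminal of arity `> i`; variables are leaves. -/
def IsTerm (ar : Nt → ℕ) (E : PreTerm Nt) : Prop :=
  E [] ≠ none ∧ ∀ p i, (E (p ++ [i]) ≠ none ↔ ∃ A, E p = some (Sum.inl A) ∧ i < ar A)

/-- a regular term: a term with finitely many distinct subterms -/
def IsRegTerm (ar : Nt → ℕ) (E : PreTerm Nt) : Prop := IsTerm ar E ∧ (subterms E).Finite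

/-- a finite term -/
def IsFinTerm (ar : Nt → ℕ) (E : PreTerm Nt) : Prop := IsTerm ar E ∧ (positions E).Finite

/-- does an (optional) label carry a variable? -/
def isVarLabel : Option (Sym Nt) → Bool
  | some (Sum.inr _) => true
  | _ => false

/-- The term `Eσ` obtained by applying the substitution `σ` to `E`:  at a position
`p = p₁ ++ p₂` where `p₁` is the (unique, if any) prefix of `p` at which `E` carries
a variable `x`, the label is that of `σ(x)` at `p₂`; elsewhere it is that of `E`. -/
def substPre (E : PreTerm Nt) (σ : ℕ → PreTerm Nt) : PreTerm Nt := fun p =>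
  match (List.range (p.length + 1)).find? (fun k => isVarLabel (E (p.take k))) with
  | some k =>
    match E (p.take k) with
    | some (Sum.inr i) => σ i (p.drop k)
    | _ => none
  | none => E p

/-- the term `A(x_1,…,x_k)σ`, whose root is `A` and whose `j`-th child is `σ(x_{j+1})` -/
def headTerm (A : Nt) (k : ℕ) (σ : ℕ → PreTerm Nt) : PreTerm Nt := fun p =>
  match p with
  | [] => some (Sum.inl A)
  | j :: p' => if j < k then σ j p' else none

/-- a rule `A(x_1,…,x_{ar(A)}) →_a E` of a first-order grammar -/
structure GRule (Nt Act : Type) where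
  lhsA : Nt
  act : Act
  rhs : PreTerm Nt

/-- a first-order grammar `G = (N, Σ, R)` -/
structure Grammar where
  Nt : Type
  Act : Type
  ar : Nt → ℕ
  rules : Set (GRule Nt Act)

/-- Well-formedness of a first-order grammar: the ranked alphabet `N` and the action
alphabet `Σ` are finite, there are finitely many rules, and each right-hand side is a
finite term all of whose variables are among `x_1, …, x_{ar(A)}` for the
left-hand-side nonterminal `A`. -/
def Grammar.WF (G : Grammar) : Prop :=
  Finite G.Nt ∧ Finite G.Act ∧ G.rules.Finite ∧
    ∀ r ∈ G.rules, IsFinTerm G.ar r.rhs ∧ varsOf r.rhs ⊆ {i | i < G.ar r.lhsA}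

/-- The transition relation of the labelled transition system `L_G`: each rule
`A(x_1,…,x_{ar(A)}) →_a E` induces `A(x_1,…,x_{ar(A)})σ →_a Eσ` for every
substitution `σ`. -/
def gstepP (G : Grammar) (a : G.Act) (E F : PreTerm G.Nt) : Prop :=
  ∃ r ∈ G.rules, r.act = a ∧
    ∃ σ : ℕ → PreTerm G.Nt, E = headTerm r.lhsA (G.ar r.lhsA) σ ∧ F = substPre r.rhs σ

/-- The transition relation of `L_G` augmented with a self-loop `x →_{a_x} x` with
a fresh action `a_x` for every variable `x` (so that `el(x,E) = 0` for `E ≠ x`). -/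
def gstepA (G : Grammar) : G.Act ⊕ ℕ → PreTerm G.Nt → PreTerm G.Nt → Prop
  | Sum.inl a => gstepP G a
  | Sum.inr i => fun E F => E = varPre i ∧ F = varPre i

section LTS

variable {Act S : Type*}

/-- `R` is a (strong) bisimulation for the transition relation `tr` -/
def IsBisim (tr : Act → S → S → Prop) (R : S → S → Prop) : Prop :=
  ∀ s t, R s t →
    (∀ a s', tr a s s' → ∃ t', tr a t t' ∧ R s' t') ∧
    (∀ a t', tr a t t' → ∃ s', tr a s s' ∧ R s' t')

/-- bisimilarity: the largest bisimulation -/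
def Bisim (tr : Act → S → S → Prop) (s t : S) : Prop := ∃ R, IsBisim tr R ∧ R s t

/-- the approximants `∼_k` of bisimilarity -/
def approx (tr : Act → S → S → Prop) : ℕ → S → S → Prop
  | 0 => fun _ _ => True
  | k + 1 => fun s t => approx tr k s t ∧
      (∀ a s', tr a s s' → ∃ t', tr a t t' ∧ approx tr k s' t') ∧
      (∀ a t', tr a t t' → ∃ s', tr a s s' ∧ approx tr k s' t')

/-- the equivalence level `el(s,t) = sup {k ∈ ℕ | s ∼_k t} ∈ ℕ ∪ {ω}` -/
def elev (tr : Act → S → S → Prop) (s t : S) : ℕ∞ :=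
  sSup {e : ℕ∞ | ∃ k : ℕ, approx tr k s t ∧ e = (k : ℕ∞)}

end LTS

/-- the size `|G|` of a grammar -/
def gsize (G : Grammar) : ℕ := ∑ᶠ r ∈ G.rules, (G.ar r.lhsA + 1 + size1 r.rhs)

/-- `m`: the maximal arity of a nonterminal -/
def maxAr (G : Grammar) : ℕ := sSup (Set.range G.ar)

/-- `hinc`: the maximal height increase in one transition step -/
def hinc (G : Grammar) : ℕ := sSup {k | ∃ r ∈ G.rules, k = heightP r.rhs - 1}

/-- `sinc`: the maximal size increase in one transition step -/
def sinc (G : Grammar) : ℕ := sSup {k | ∃ r ∈ G.rules, k = ntcount r.rhs}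

end FOG

namespace FOG

/-- An `(n,s,g)`-candidate basis for non-equivalence: a set `B` of pairs of
non-bisimilar regular terms together with numbers `(s_i)_{i≤n}` and `(e_i)_{i≤n}`
such that each pair `(E,F) ∈ B` satisfies `vars(E,F) = {x_1,…,x_i}` and
`|E,F| ≤ s_i` for some `i ≤ n`, `s_n = s`,
`e_i = max {el(E,F) | (E,F) ∈ B, |E,F| ≤ s_i}` (with `max ∅ = 0`), and
`s_{i-1} = 2·s_i + g + e_i·(sinc + g)`. -/
structure CBasis (G : Grammar) (n s g : ℕ) where
  B : Set (PreTerm G.Nt × PreTerm G.Nt)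
  sq : ℕ → ℕ
  eq : ℕ → ℕ
  regular : ∀ p ∈ B, IsRegTerm G.ar p.1 ∧ IsRegTerm G.ar p.2
  nonequiv : ∀ p ∈ B, ¬ Bisim (gstepA G) p.1 p.2
  mem_bounds : ∀ p ∈ B, ∃ i ≤ n, vars2 p.1 p.2 = {k | k < i} ∧ size2 p.1 p.2 ≤ sq i
  sq_last : sq n = s
  eq_def : ∀ i ≤ n, (eq i : ℕ∞) =
    sSup {e : ℕ∞ | ∃ p ∈ B, size2 p.1 p.2 ≤ sq i ∧ elev (gstepA G) p.1 p.2 = e}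
  sq_def : ∀ i < n, sq i = 2 * sq (i + 1) + g + eq (i + 1) * (sinc G + g)

/-- `Pairs_i`: the pairs of regular terms `(E,F)` with `vars(E,F) = {x_1,…,x_j}`
for some `j ≤ i` and `|E,F| ≤ s_i`. -/
def PairsI (G : Grammar) (sq : ℕ → ℕ) (i : ℕ) : Set (PreTerm G.Nt × PreTerm G.Nt) :=
  {p | IsRegTerm G.ar p.1 ∧ IsRegTerm G.ar p.2 ∧
    (∃ j ≤ i, vars2 p.1 p.2 = {k | k < j}) ∧ size2 p.1 p.2 ≤ sq i}

/-- a candidate basis is full below `e` if it contains every pair of `Pairs_i`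
(for every `i ≤ n`) whose equivalence level is `< e` -/
def CBasis.FullBelow {G : Grammar} {n s g : ℕ} (C : CBasis G n s g) (e : ℕ∞) : Prop :=
  ∀ i ≤ n, ∀ p ∈ PairsI G C.sq i, elev (gstepA G) p.1 p.2 < e → p ∈ C.B

/-- a full candidate basis (full below `ω`) -/
def CBasis.Full {G : Grammar} {n s g : ℕ} (C : CBasis G n s g) : Prop := C.FullBelow ⊤

/-- the bound `E_B = n + 1 + Σ_{i=0}^{n} e_i` associated with a candidate basis -/
def EBound {G : Grammar} {n s g : ℕ} (C : CBasis G n s g) : ℕ :=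
  n + 1 + ∑ i ∈ Finset.range (n + 1), C.eq i

end FOG

namespace FOG

variable {Nt : Type}

lemma subAt_nil (E : PreTerm Nt) : subAt E [] = E := rfl

lemma subAt_subAt (E : PreTerm Nt) (p q : List ℕ) :
    subAt (subAt E p) q = subAt E (p ++ q) := by
  funext r; simp [subAt, List.append_assoc]

lemma self_mem_subterms {E : PreTerm Nt} (h : E [] ≠ none) : E ∈ subterms E :=
  ⟨[], h, rfl⟩

lemma mem_subterms_root_ne {E F : PreTerm Nt} (h : F ∈ subterms E) : F [] ≠ none := by
  obtain ⟨p, hp, rfl⟩ := h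
  simpa [subAt] using hp

lemma subAt_mem_subterms {E F : PreTerm Nt} (h : F ∈ subterms E) {q : List ℕ}
    (hq : F q ≠ none) : subAt F q ∈ subterms E := by
  obtain ⟨p, hp, rfl⟩ := h
  exact ⟨p ++ q, by simpa [subAt] using hq, subAt_subAt E p q⟩

lemma isTerm_subAt {ar : Nt → ℕ} {E : PreTerm Nt} (h : IsTerm ar E) {p : List ℕ}
    (hp : E p ≠ none) : IsTerm ar (subAt E p) := by
  constructor
  · simpa [subAt] using hp
  · intro q i
    have := h.2 (p ++ q) i
    simpa [subAt, List.append_assoc] using this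

lemma isTerm_of_mem_subterms {ar : Nt → ℕ} {E F : PreTerm Nt} (h : IsTerm ar E)
    (hF : F ∈ subterms E) : IsTerm ar F := by
  obtain ⟨p, hp, rfl⟩ := hF
  exact isTerm_subAt h hp

/-- positions are closed under prefixes -/
lemma prefix_ne_none {ar : Nt → ℕ} {F : PreTerm Nt} (h : IsTerm ar F) (p : List ℕ) :
    ∀ q : List ℕ, F (p ++ q) ≠ none → F p ≠ none := by
  intro q
  induction q using List.reverseRecOn generalizing p with
  | nil => simp
  | append_singleton l i ih =>
      intro hne
      have : F ((p ++ l) ++ [i]) ≠ none := by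
        simpa [List.append_assoc] using hne
      obtain ⟨A, hA, _⟩ := (h.2 (p ++ l) i).mp this
      exact ih p (by simp [hA])

lemma varsOf_subAt {E : PreTerm Nt} {p : List ℕ} : varsOf (subAt E p) ⊆ varsOf E := by
  rintro i ⟨q, hq⟩
  exact ⟨p ++ q, hq⟩

section LTSlem

variable {Act S : Type*} {tr : Act → S → S → Prop}

lemma approx_of_isBisim {R : S → S → Prop} (hR : IsBisim tr R) :
    ∀ k s t, R s t → approx tr k s t := by
  intro k
  induction k with
  | zero => intro s t _; trivial
  | succ k ih =>
      intro s t hst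
      refine ⟨ih s t hst, ?_, ?_⟩
      · intro a s' hs'
        obtain ⟨t', ht', hR'⟩ := (hR s t hst).1 a s' hs'
        exact ⟨t', ht', ih _ _ hR'⟩
      · intro a t' ht'
        obtain ⟨s', hs', hR'⟩ := (hR s t hst).2 a t' ht'
        exact ⟨s', hs', ih _ _ hR'⟩

lemma elev_eq_top_of_bisim {s t : S} (h : Bisim tr s t) : elev tr s t = ⊤ := by
  obtain ⟨R, hR, hst⟩ := h
  have hle : ∀ k : ℕ, (k : ℕ∞) ≤ elev tr s t := by
    intro k
    exact le_sSup ⟨k, approx_of_isBisim hR k s t hst, rfl⟩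
  by_contra hne
  obtain ⟨m, hm⟩ : ∃ m : ℕ, elev tr s t = (m : ℕ∞) := by
    cases h' : elev tr s t with
    | top => exact absurd h' hne
    | coe m => exact ⟨m, rfl⟩
  have := hle (m + 1)
  rw [hm] at this
  exact absurd (Nat.cast_le.mp this) (by omega)

lemma not_bisim_of_elev_lt_top {s t : S} (h : elev tr s t < ⊤) : ¬ Bisim tr s t :=
  fun hb => absurd (elev_eq_top_of_bisim hb) (by intro he; rw [he] at h; exact lt_irrefl _ h)

end LTSlem

end FOG
namespace FOG

variable {Nt : Type}

/-- arity of an encoded label (variables have arity 0) -/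
def arL (ar : Nt → ℕ) {nv : ℕ} : Nt ⊕ Fin (nv + 1) → ℕ := Sum.elim ar (fun _ => 0)

/-- run a finite machine along a path -/
def runM (ar : Nt → ℕ) {c nv mv : ℕ} (lab : Fin (c + 1) → Nt ⊕ Fin (nv + 1))
    (child : Fin (c + 1) → Fin mv → Fin (c + 1)) :
    List ℕ → Fin (c + 1) → Option (Fin (c + 1))
  | [], st => some st
  | i :: p, st =>
      if h : i < arL ar (lab st) ∧ i < mv then
        runM ar lab child p (child st ⟨i, h.2⟩)
      else none

/-- decode a finite machine into a preterm -/
def decodeM (ar : Nt → ℕ) {c nv mv : ℕ}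
    (M : (Fin (c + 1) → Nt ⊕ Fin (nv + 1)) × (Fin (c + 1) → Fin mv → Fin (c + 1)) × Fin (c + 1)) :
    PreTerm Nt := fun p =>
  (runM ar M.1 M.2.1 p M.2.2).map (fun st => Sum.map id Fin.val (M.1 st))

/-- the set of regular terms of bounded size with bounded variables -/
def Tset (ar : Nt → ℕ) (c nv : ℕ) : Set (PreTerm Nt) :=
  {E | IsRegTerm ar E ∧ size1 E ≤ c ∧ varsOf E ⊆ {k | k < nv}}

lemma Tset_subset_range (ar : Nt → ℕ) (c nv mv : ℕ) (harm : ∀ A, ar A ≤ mv) :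
    Tset ar c nv ⊆ Set.range (decodeM (c := c) (nv := nv) (mv := mv) ar) := by
  rintro E ⟨⟨hTerm, hfin⟩, hsize, hvars⟩
  classical
  -- set of subterms, with a Fintype instance
  haveI : Fintype (subterms E) := hfin.fintype
  have hE0 : E [] ≠ none := hTerm.1
  have hEmem : E ∈ subterms E := self_mem_subterms hE0
  have hcard : Fintype.card (subterms E) ≤ c + 1 := by
    have : (subterms E).ncard = Fintype.card (subterms E) := by
      rw [Set.fintypeCard_eq_ncard]
    have h1 : (subterms E).ncard ≤ c := hsize
    omega
  set cs := Fintype.card (subterms E) with hcs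
  let e : subterms E ≃ Fin cs := Fintype.equivFin _
  let f : subterms E → Fin (c + 1) := fun F => Fin.castLE hcard (e F)
  let gg : Fin (c + 1) → subterms E := fun st =>
    if h : st.val < cs then e.symm ⟨st.val, h⟩ else ⟨E, hEmem⟩
  have hgf : ∀ F, gg (f F) = F := by
    intro F
    have h : (f F).val < cs := (e F).isLt
    simp only [gg, dif_pos h]
    have : (⟨(f F).val, h⟩ : Fin cs) = e F := by
      apply Fin.ext; rfl
    rw [this, Equiv.symm_apply_apply]
  -- labels
  let lab : Fin (c + 1) → Nt ⊕ Fin (nv + 1) := fun st =>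
    match (gg st).val [] with
    | some (Sum.inl A) => Sum.inl A
    | some (Sum.inr k) => if h : k < nv + 1 then Sum.inr ⟨k, h⟩ else Sum.inr 0
    | none => Sum.inr 0
  -- children
  let child : Fin (c + 1) → Fin mv → Fin (c + 1) := fun st i =>
    if h : (gg st).val [i.val] ≠ none then
      f ⟨subAt (gg st).val [i.val], subAt_mem_subterms (gg st).2 h⟩
    else f ⟨E, hEmem⟩
  refine ⟨(lab, child, f ⟨E, hEmem⟩), ?_⟩
  -- main induction on paths
  have main : ∀ (p : List ℕ) (F : PreTerm Nt) (hF : F ∈ subterms E),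
      (F p = none → runM ar lab child p (f ⟨F, hF⟩) = none) ∧
      (∀ h : F p ≠ none,
        runM ar lab child p (f ⟨F, hF⟩) = some (f ⟨subAt F p, subAt_mem_subterms hF h⟩)) := by
    intro p
    induction p with
    | nil =>
        intro F hF
        refine ⟨fun h => absurd h (by simpa using mem_subterms_root_ne hF), fun h => ?_⟩
        rfl
    | cons i p ih =>
        intro F hF
        have hFT : IsTerm ar F := isTerm_of_mem_subterms hTerm hF
        have hlab : lab (f ⟨F, hF⟩) =
            (match F [] with
            | some (Sum.inl A) => Sum.inl A
            | some (Sum.inr k) => if h : k < nv + 1 then Sum.inr ⟨k, h⟩ else Sum.inr 0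
            | none => Sum.inr 0) := by
          simp only [lab, hgf]
        -- case on the root label of F
        rcases hroot : F [] with _ | l
        · exact absurd hroot (mem_subterms_root_ne hF)
        rcases l with A | k
        · -- nonterminal root
          have harL : arL ar (lab (f ⟨F, hF⟩)) = ar A := by
            rw [hlab, hroot]
            rfl
          by_cases hi : i < ar A
          · -- valid child index
            have hchildne : F [i] ≠ none := by
              have := (hFT.2 [] i).mpr ⟨A, hroot, hi⟩
              simpa using this
            have himv : i < mv := lt_of_lt_of_le hi (harm A)
            have hcond : i < arL ar (lab (f ⟨F, hF⟩)) ∧ i < mv := ⟨by rw [harL]; exact hi, himv⟩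
            have hchild : child (f ⟨F, hF⟩) ⟨i, himv⟩ =
                f ⟨subAt F [i], subAt_mem_subterms hF hchildne⟩ := by
              simp only [child, hgf]
              rw [dif_pos hchildne]
            have hrun : runM ar lab child (i :: p) (f ⟨F, hF⟩) =
                runM ar lab child p (f ⟨subAt F [i], subAt_mem_subterms hF hchildne⟩) := by
              rw [runM, dif_pos hcond]
              congr 1
            obtain ⟨ih1, ih2⟩ := ih (subAt F [i]) (subAt_mem_subterms hF hchildne)
            constructor
            · intro hnone
              rw [hrun]
              exact ih1 hnone
            · intro hne
              rw [hrun, ih2 hne]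
              congr 1
          · -- invalid child index: no position
            have hnone : F (i :: p) = none := by
              by_contra hne
              have : F ([] ++ [i]) ≠ none := by
                have := prefix_ne_none hFT ([] ++ [i]) p (by simpa using hne)
                simpa using this
              obtain ⟨A', hA', hi'⟩ := (hFT.2 [] i).mp this
              rw [hroot] at hA'
              injection hA' with hA'
              injection hA' with hA'
              exact hi (hA' ▸ hi')
            have hcond : ¬ (i < arL ar (lab (f ⟨F, hF⟩)) ∧ i < mv) := by
              rw [harL]; exact fun h => hi h.1
            refine ⟨fun _ => ?_, fun h => absurd hnone h⟩
            rw [runM, dif_neg hcond]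
        · -- variable root: arity 0
          have harL : arL ar (lab (f ⟨F, hF⟩)) = 0 := by
            rw [hlab, hroot]
            by_cases h : k < nv + 1 <;> simp [arL, h]
          have hnone : F (i :: p) = none := by
            by_contra hne
            have : F ([] ++ [i]) ≠ none := by
              have := prefix_ne_none hFT ([] ++ [i]) p (by simpa using hne)
              simpa using this
            obtain ⟨A', hA', _⟩ := (hFT.2 [] i).mp this
            rw [hroot] at hA'
            exact (by injection hA' with h'; exact nomatch h' : False)
          have hcond : ¬ (i < arL ar (lab (f ⟨F, hF⟩)) ∧ i < mv) := by
            rw [harL]; omega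
          refine ⟨fun _ => ?_, fun h => absurd hnone h⟩
          rw [runM, dif_neg hcond]
  -- conclude
  funext p
  show (runM ar lab child p (f ⟨E, hEmem⟩)).map _ = E p
  rcases hp : E p with _ | l
  · rw [(main p E hEmem).1 hp]
    rfl
  · have hne : E p ≠ none := by rw [hp]; exact Option.some_ne_none _
    rw [(main p E hEmem).2 hne]
    have hsub : (subAt E p) [] = E p := by simp [subAt]
    have hlab2 : lab (f ⟨subAt E p, subAt_mem_subterms hEmem hne⟩) =
        (match (subAt E p) [] with
        | some (Sum.inl A) => Sum.inl A
        | some (Sum.inr k) => if h : k < nv + 1 then Sum.inr ⟨k, h⟩ else Sum.inr 0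
        | none => Sum.inr 0) := by
      simp only [lab, hgf]
    rcases l with A | k
    · simp only [Option.map_some, decodeM]
      rw [hlab2, hsub, hp]
      rfl
    · have hk : k < nv := hvars ⟨p, hp⟩
      simp only [Option.map_some]
      rw [hlab2, hsub, hp]
      simp only [dif_pos (Nat.lt_succ_of_lt hk)]
      rfl

lemma Tset_finite (ar : Nt → ℕ) [Finite Nt] (c nv : ℕ) : (Tset ar c nv).Finite := by
  obtain ⟨mv, hmv⟩ : ∃ mv, ∀ A, ar A ≤ mv := by
    obtain ⟨mv, hmv⟩ := (Set.finite_range ar).bddAbove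
    exact ⟨mv, fun A => hmv ⟨A, rfl⟩⟩
  exact Set.Finite.subset (Set.finite_range _) (Tset_subset_range ar c nv mv hmv)

end FOG
namespace FOG

/-- the equivalence level of a pair of terms in `L_G` (with variable self-loops) -/
def el2 (G : Grammar) (p : PreTerm G.Nt × PreTerm G.Nt) : ℕ∞ := elev (gstepA G) p.1 p.2

/-- pairs of non-bisimilar regular terms with variables `x_1,…,x_j` (`j ≤ n`)
and size bounded by `f j` -/
def QsetF (G : Grammar) (n : ℕ) (f : ℕ → ℕ) : Set (PreTerm G.Nt × PreTerm G.Nt) :=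
  {p | IsRegTerm G.ar p.1 ∧ IsRegTerm G.ar p.2 ∧ el2 G p < ⊤ ∧
    ∃ j ≤ n, vars2 p.1 p.2 = {k | k < j} ∧ size2 p.1 p.2 ≤ f j}

/-- the sequence `m ↦ s_{n-m}` of the canonical full candidate basis -/
def Fseq (G : Grammar) (n s g : ℕ) : ℕ → ℕ
  | 0 => s
  | m + 1 => 2 * Fseq G n s g m + g +
      (sSup (el2 G '' QsetF G n (fun j => Fseq G n s g (min m (n - j))))).toNat * (sinc G + g)
  termination_by m => m
  decreasing_by all_goals omega

def Qset (G : Grammar) (n s g m : ℕ) : Set (PreTerm G.Nt × PreTerm G.Nt) :=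
  QsetF G n (fun j => Fseq G n s g (min m (n - j)))

def eqq (G : Grammar) (n s g m : ℕ) : ℕ := (sSup (el2 G '' Qset G n s g m)).toNat

def sqq (G : Grammar) (n s g i : ℕ) : ℕ := Fseq G n s g (n - i)

/-- the canonical full basis set -/
def Bcan (G : Grammar) (n s g : ℕ) : Set (PreTerm G.Nt × PreTerm G.Nt) :=
  QsetF G n (sqq G n s g)

variable (G : Grammar) (n s g : ℕ)

lemma Fseq_zero : Fseq G n s g 0 = s := by rw [Fseq]

lemma Fseq_succ (m : ℕ) :
    Fseq G n s g (m + 1) = 2 * Fseq G n s g m + g + eqq G n s g m * (sinc G + g) := by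
  rw [Fseq]; rfl

lemma Fseq_mono : Monotone (Fseq G n s g) := by
  apply monotone_nat_of_le_succ
  intro m
  rw [Fseq_succ]
  omega

lemma sqq_antitone : Antitone (sqq G n s g) := by
  intro i j hij
  exact Fseq_mono G n s g (by omega)

lemma inter_eq_Qset (i : ℕ) :
    {p | p ∈ Bcan G n s g ∧ size2 p.1 p.2 ≤ sqq G n s g i} = Qset G n s g (n - i) := by
  ext p
  simp only [Bcan, Qset, QsetF, Set.mem_setOf_eq, sqq]
  constructor
  · rintro ⟨⟨r1, r2, he, j, hj, hv, hs⟩, hsz⟩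
    refine ⟨r1, r2, he, j, hj, hv, ?_⟩
    rw [(Fseq_mono G n s g).map_min]
    exact le_min hsz hs
  · rintro ⟨r1, r2, he, j, hj, hv, hs⟩
    rw [(Fseq_mono G n s g).map_min] at hs
    exact ⟨⟨r1, r2, he, j, hj, hv, le_trans hs (min_le_right _ _)⟩,
      le_trans hs (min_le_left _ _)⟩

lemma Qset_finite [Finite G.Nt] (m : ℕ) : (Qset G n s g m).Finite := by
  apply Set.Finite.subset
    ((Tset_finite G.ar (Fseq G n s g m) n).prod (Tset_finite G.ar (Fseq G n s g m) n))
  rintro p ⟨r1, r2, _, j, hj, hv, hs⟩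
  have hsm : size2 p.1 p.2 ≤ Fseq G n s g m :=
    le_trans hs (Fseq_mono G n s g (min_le_left _ _))
  have hfin : (subterms p.1 ∪ subterms p.2).Finite := r1.2.union r2.2
  have hvsub : vars2 p.1 p.2 ⊆ {k | k < n} := by
    rw [hv]; intro k hk; exact lt_of_lt_of_le hk hj
  constructor
  · refine ⟨r1, le_trans ?_ hsm, fun k hk => hvsub (Or.inl hk)⟩
    exact Set.ncard_le_ncard Set.subset_union_left hfin
  · refine ⟨r2, le_trans ?_ hsm, fun k hk => hvsub (Or.inr hk)⟩
    exact Set.ncard_le_ncard Set.subset_union_right hfin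

lemma sSup_Qset_ne_top [Finite G.Nt] (m : ℕ) : sSup (el2 G '' Qset G n s g m) ≠ ⊤ := by
  rcases (el2 G '' Qset G n s g m).eq_empty_or_nonempty with h | h
  · rw [h, sSup_empty]; exact bot_ne_top
  · have hmem := h.csSup_mem ((Qset_finite G n s g m).image _)
    obtain ⟨p, hp, hel⟩ := hmem
    rw [← hel]
    exact hp.2.2.1.ne

lemma eqq_cast [Finite G.Nt] (m : ℕ) :
    ((eqq G n s g m : ℕ) : ℕ∞) = sSup (el2 G '' Qset G n s g m) :=
  ENat.coe_toNat (sSup_Qset_ne_top G n s g m)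

lemma eqq_spec [Finite G.Nt] (i : ℕ) :
    ((eqq G n s g (n - i) : ℕ) : ℕ∞) =
      sSup {e : ℕ∞ | ∃ p ∈ Bcan G n s g, size2 p.1 p.2 ≤ sqq G n s g i ∧ el2 G p = e} := by
  rw [eqq_cast]
  congr 1
  ext e
  constructor
  · rintro ⟨p, hp, rfl⟩
    have hp' : p ∈ {p | p ∈ Bcan G n s g ∧ size2 p.1 p.2 ≤ sqq G n s g i} := by
      rw [inter_eq_Qset]; exact hp
    exact ⟨p, hp'.1, hp'.2, rfl⟩
  · rintro ⟨p, hp, hs, rfl⟩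
    have hp' : p ∈ Qset G n s g (n - i) := by
      rw [← inter_eq_Qset]; exact ⟨hp, hs⟩
    exact ⟨p, hp', rfl⟩

/-- the canonical full candidate basis -/
def Ccan [Finite G.Nt] : CBasis G n s g where
  B := Bcan G n s g
  sq := sqq G n s g
  eq := fun i => eqq G n s g (n - i)
  regular := fun p hp => ⟨hp.1, hp.2.1⟩
  nonequiv := fun p hp => not_bisim_of_elev_lt_top hp.2.2.1
  mem_bounds := fun p hp => by
    obtain ⟨r1, r2, he, j, hj, hv, hs⟩ := hp
    exact ⟨j, hj, hv, hs⟩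
  sq_last := by simp [sqq, Fseq_zero]
  eq_def := fun i _ => eqq_spec G n s g i
  sq_def := fun i hi => by
    have h1 : n - i = (n - (i + 1)) + 1 := by omega
    show sqq G n s g i = _
    rw [sqq, h1, Fseq_succ]
    rfl

lemma Ccan_full [Finite G.Nt] : (Ccan G n s g).Full := by
  intro i hi p hp hel
  obtain ⟨r1, r2, ⟨j, hj, hv⟩, hs⟩ := hp
  refine ⟨r1, r2, hel, j, le_trans hj hi, hv, ?_⟩
  exact le_trans hs (sqq_antitone G n s g hj)

end FOG
namespace FOG

variable (G : Grammar) (n s g : ℕ)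

lemma setEq (C' : CBasis G n s g) (hC' : C'.Full) (i : ℕ) (hi : i ≤ n)
    (hsq : ∀ j, i ≤ j → j ≤ n → C'.sq j = sqq G n s g j) :
    {p | p ∈ C'.B ∧ size2 p.1 p.2 ≤ C'.sq i} =
      {p | p ∈ Bcan G n s g ∧ size2 p.1 p.2 ≤ sqq G n s g i} := by
  have hii : C'.sq i = sqq G n s g i := hsq i le_rfl hi
  ext p
  simp only [Set.mem_setOf_eq]
  constructor
  · rintro ⟨hpB, hsz⟩
    have hreg := C'.regular p hpB
    have heltop : el2 G p < ⊤ := by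
      have hmem : elev (gstepA G) p.1 p.2 ∈
          {e : ℕ∞ | ∃ q ∈ C'.B, size2 q.1 q.2 ≤ C'.sq i ∧ elev (gstepA G) q.1 q.2 = e} :=
        ⟨p, hpB, hsz, rfl⟩
      have hle := le_sSup hmem
      rw [← C'.eq_def i hi] at hle
      have hnt : ((C'.eq i : ℕ) : ℕ∞) ≠ ⊤ := ENat.coe_ne_top _
      exact lt_of_le_of_lt hle hnt.lt_top
    obtain ⟨j, hj, hv, hs⟩ := C'.mem_bounds p hpB
    have hsj : size2 p.1 p.2 ≤ sqq G n s g j := by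
      by_cases hji : i ≤ j
      · rw [← hsq j hji hj]; exact hs
      · exact le_trans (hii ▸ hsz) (sqq_antitone G n s g (le_of_not_ge hji))
    exact ⟨⟨hreg.1, hreg.2, heltop, j, hj, hv, hsj⟩, hii ▸ hsz⟩
  · rintro ⟨⟨r1, r2, he, j, hj, hv, hs⟩, hsz⟩
    have hpB : p ∈ C'.B := by
      by_cases hji : j ≤ i
      · exact hC' i hi p ⟨r1, r2, ⟨j, hji, hv⟩, by rw [hii]; exact hsz⟩ he
      · exact hC' j hj p ⟨r1, r2, ⟨j, le_rfl, hv⟩,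
          by rw [hsq j (le_of_not_ge hji) hj]; exact hs⟩ he
    exact ⟨hpB, by rw [hii]; exact hsz⟩

lemma eqEq [Finite G.Nt] (C' : CBasis G n s g) (hC' : C'.Full) (i : ℕ) (hi : i ≤ n)
    (hsq : ∀ j, i ≤ j → j ≤ n → C'.sq j = sqq G n s g j) :
    C'.eq i = eqq G n s g (n - i) := by
  have h1 := C'.eq_def i hi
  have hset : {e : ℕ∞ | ∃ p ∈ C'.B, size2 p.1 p.2 ≤ C'.sq i ∧ elev (gstepA G) p.1 p.2 = e} =
      {e : ℕ∞ | ∃ p ∈ Bcan G n s g, size2 p.1 p.2 ≤ sqq G n s g i ∧ el2 G p = e} := by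
    have hiff := Set.ext_iff.mp (setEq G n s g C' hC' i hi hsq)
    ext e
    constructor
    · rintro ⟨p, hp, hs, rfl⟩
      obtain ⟨h1', h2'⟩ := (hiff p).mp ⟨hp, hs⟩
      exact ⟨p, h1', h2', rfl⟩
    · rintro ⟨p, hp, hs, rfl⟩
      obtain ⟨h1', h2'⟩ := (hiff p).mpr ⟨hp, hs⟩
      exact ⟨p, h1', h2', rfl⟩
  rw [hset, ← eqq_spec G n s g i] at h1
  exact_mod_cast h1

end FOG
open FOG in
/-- For every first-order grammar `G = (N,Σ,R)` and all
`n, s, g ∈ ℕ` there is a unique full `(n,s,g)`-candidate basis for non-equivalence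
(unique as a set of pairs, with its uniquely determined associated numbers). -/
theorem exists_unique_full_candidate_basis (G : Grammar) (hG : G.WF) (n s g : ℕ) :
    ∃ C : CBasis G n s g, C.Full ∧
      ∀ C' : CBasis G n s g, C'.Full →
        C'.B = C.B ∧ ∀ i ≤ n, C'.sq i = C.sq i ∧ C'.eq i = C.eq i := by
  haveI : Finite G.Nt := hG.1
  refine ⟨Ccan G n s g, Ccan_full G n s g, ?_⟩
  intro C' hC'
  have hsqall : ∀ m i, i ≤ n → n - i ≤ m → C'.sq i = sqq G n s g i := by
    intro m
    induction m with
    | zero =>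
        intro i hi hni
        have hin : i = n := by omega
        subst hin
        rw [C'.sq_last]
        simp [sqq, Fseq_zero]
    | succ m ih =>
        intro i hi hni
        by_cases h : n - i ≤ m
        · exact ih i hi h
        · have hlt : i < n := by omega
          have hsq1 : ∀ j, i + 1 ≤ j → j ≤ n → C'.sq j = sqq G n s g j :=
            fun j h1 h2 => ih j h2 (by omega)
          have heq1 : C'.eq (i + 1) = eqq G n s g (n - (i + 1)) :=
            eqEq G n s g C' hC' (i + 1) hlt hsq1
          have hcan : sqq G n s g i =
              2 * sqq G n s g (i + 1) + g + eqq G n s g (n - (i + 1)) * (sinc G + g) :=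
            (Ccan G n s g).sq_def i hlt
          rw [C'.sq_def i hlt, hsq1 (i + 1) le_rfl hlt, heq1]
          exact hcan.symm
  have hsqn : ∀ i, i ≤ n → C'.sq i = sqq G n s g i := fun i hi => hsqall n i hi (by omega)
  constructor
  · ext p
    constructor
    · intro hp
      obtain ⟨j, hj, hv, hs⟩ := C'.mem_bounds p hp
      have hiff := Set.ext_iff.mp
        (setEq G n s g C' hC' j hj (fun j' _ h2 => hsqn j' h2)) p
      exact ((hiff.mp ⟨hp, hs⟩).1 : p ∈ Bcan G n s g)
    · intro hp
      have hp' : p ∈ Bcan G n s g := hp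
      obtain ⟨r1, r2, he, j, hj, hv, hs⟩ := hp'
      have hiff := Set.ext_iff.mp
        (setEq G n s g C' hC' j hj (fun j' _ h2 => hsqn j' h2)) p
      exact (hiff.mpr ⟨⟨r1, r2, he, j, hj, hv, hs⟩, hs⟩).1
  · intro i hi
    exact ⟨hsqn i hi, eqEq G n s g C' hC' i hi (fun j _ h2 => hsqn j h2)⟩
end
end

section
/- Let M = (Q, Σ, Γ, Δ) be a pushdown system whose ε-rules are all deterministic and popping, with Q = {q1,…,qm}, and let G_M be the first-order grammar obtained by the translation that preprocesses silent steps (using T(pYγ) = T(qγ) when pY is unstable with ε-rule pY →_ε q). Then for all configurations pγ, qγ' of M: pγ ≈ qγ' in L_M if and only if T(pγ) ∼ T(qγ') in L_{G_M}. -/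
open scoped ENat

noncomputable section

namespace PDS

/-- a transition rule `pY →_a qγ` of a pushdown system (`a = none` means `ε`) -/
structure PRule (Q Act Γ : Type) where
  p : Q
  Y : Γ
  a : Option Act
  q : Q
  out : List Γ

/-- The transition relation of the LTS `L_M` generated by a pushdown system with
rule set `Δ`: each rule `pY →_a qγ` induces `pYγ' →_a qγγ'` for all `γ' ∈ Γ*`. -/
def pstep {Q Act Γ : Type} (Δ : Set (PRule Q Act Γ)) :
    Option Act → Q × List Γ → Q × List Γ → Prop := fun a s t =>
  ∃ r ∈ Δ, r.a = a ∧ ∃ γ' : List Γ, s = (r.p, r.Y :: γ') ∧ t = (r.q, r.out ++ γ')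

section Weak

variable {A S T : Type*}

/-- `s ⇒_a t` (for `a = ε` an arbitrary sequence of silent steps, for `a ∈ Σ` a
visible step surrounded by silent steps) -/
def wstep (tr : Option A → S → S → Prop) : Option A → S → S → Prop
  | none => Relation.ReflTransGen (tr none)
  | some a => fun s t => ∃ u v, Relation.ReflTransGen (tr none) s u ∧
      tr (some a) u v ∧ Relation.ReflTransGen (tr none) v t

/-- `R` is a weak bisimulation -/
def IsWeakBisim (tr : Option A → S → S → Prop) (R : S → S → Prop) : Prop :=
  ∀ s t, R s t →
    (∀ a s', tr a s s' → ∃ t', wstep tr a t t' ∧ R s' t') ∧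
    (∀ a t', tr a t t' → ∃ s', wstep tr a s s' ∧ R s' t')

/-- weak bisimilarity `≈`: the largest weak bisimulation -/
def WeakBisim (tr : Option A → S → S → Prop) (s t : S) : Prop :=
  ∃ R, IsWeakBisim tr R ∧ R s t

/-- the disjoint union of two labelled transition systems -/
def sumStep (t1 : A → S → S → Prop) (t2 : A → T → T → Prop) :
    A → S ⊕ T → S ⊕ T → Prop
  | a, Sum.inl s, Sum.inl s' => t1 a s s'
  | a, Sum.inr t, Sum.inr t' => t2 a t t'
  | _, _, _ => False

/-- regard an LTS without silent actions as one with (unused) silent actions -/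
def liftTr (tr : A → S → S → Prop) : Option A → S → S → Prop
  | none => fun _ _ => False
  | some a => tr a

end Weak

end PDS

namespace PDS2G

open FOG PDS

/-- nonterminals of the grammar `G_M`: `[q]` of arity `0` and `[qY]` of arity `m` -/
abbrev NtM (m : ℕ) (Γ : Type) := Fin m ⊕ (Fin m × Γ)

/-- arities of the nonterminals of `G_M` -/
def arM (m : ℕ) (Γ : Type) : NtM m Γ → ℕ := Sum.elim (fun _ => 0) (fun _ => m)

variable {m : ℕ} {Act Γ : Type}

/-- `pY` is unstable: some `ε`-rule has left-hand side `pY` -/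
def Unstable (Δ : Set (PRule (Fin m) Act Γ)) (p : Fin m) (Y : Γ) : Prop :=
  ∃ r ∈ Δ, r.p = p ∧ r.Y = Y ∧ r.a = none

/-- The encoding `T(pγ)` of a configuration as a term, preprocessing the
(deterministic, popping) silent steps:  `T(pε) = [p]`;
`T(pYγ) = [pY](T(q₁γ),…,T(q_mγ))` if `pY` is stable; and `T(pYγ) = T(qγ)` if `pY`
is unstable with the unique `ε`-rule `pY →_ε q`. -/
noncomputable def Tpre (Δ : Set (PRule (Fin m) Act Γ)) :
    List Γ → Fin m → PreTerm (NtM m Γ)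
  | [], p => fun pos => if pos = [] then some (Sum.inl (Sum.inl p)) else none
  | Y :: γ, p =>
    letI : Decidable (Unstable Δ p Y) := Classical.propDecidable _
    if h : Unstable Δ p Y then Tpre Δ γ h.choose.q
    else fun pos =>
      match pos with
      | [] => some (Sum.inl (Sum.inr (p, Y)))
      | j :: pos' => if hj : j < m then Tpre Δ γ ⟨j, hj⟩ pos' else none

/-- the encoding `T(pγx)` with a trailing stack variable `x` (`T(q_ix) = x_i`),
preprocessing silent steps -/
noncomputable def Txpre (Δ : Set (PRule (Fin m) Act Γ)) :
    List Γ → Fin m → PreTerm (NtM m Γ)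
  | [], p => varPre p.val
  | Y :: γ, p =>
    letI : Decidable (Unstable Δ p Y) := Classical.propDecidable _
    if h : Unstable Δ p Y then Txpre Δ γ h.choose.q
    else fun pos =>
      match pos with
      | [] => some (Sum.inl (Sum.inr (p, Y)))
      | j :: pos' => if hj : j < m then Txpre Δ γ ⟨j, hj⟩ pos' else none

/-- the first-order grammar `G_M` obtained from a pushdown system `M` whose
`ε`-rules are deterministic and popping: each PDS rule `pY →_a qγ` with `a ∈ Σ`
yields the grammar rule `T(pYx) →_a T(qγx)` -/
noncomputable def GMpre (Δ : Set (PRule (Fin m) Act Γ)) : FOG.Grammar where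
  Nt := NtM m Γ
  Act := Act
  ar := arM m Γ
  rules := {gr | ∃ r ∈ Δ, ∃ a : Act, r.a = some a ∧
    gr = ⟨Sum.inr (r.p, r.Y), a, Txpre Δ r.out r.q⟩}

end PDS2G


namespace PDSAux

open FOG PDS PDS2G

section SubstLemmas
variable {Nt : Type}

lemma substPre_varPre (i : ℕ) (σ : ℕ → PreTerm Nt) :
    substPre (varPre i) σ = σ i := by
  funext p
  unfold substPre
  rw [List.range_succ_eq_map, List.find?_cons_of_pos]
  · simp [varPre]
  · simp [varPre, isVarLabel]

lemma substPre_root (E : PreTerm Nt) (σ : ℕ → PreTerm Nt)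
    (h : isVarLabel (E []) = false) : substPre E σ [] = E [] := by
  unfold substPre
  rw [List.range_succ_eq_map, List.find?_cons_of_neg]
  · simp
  · simp [h]

lemma substPre_none (σ : ℕ → PreTerm Nt) :
    substPre (fun _ => (none : Option (Sym Nt))) σ = fun _ => none := by
  funext p
  unfold substPre
  have : List.find? (fun k => isVarLabel ((fun _ => (none : Option (Sym Nt))) (p.take k)))
      (List.range (p.length + 1)) = none := by
    rw [List.find?_eq_none]; intro x _; simp [isVarLabel]
  rw [this]

lemma substPre_child (E : PreTerm Nt) (σ : ℕ → PreTerm Nt)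
    (hroot : isVarLabel (E []) = false) (j : ℕ) (p : List ℕ) :
    substPre E σ (j :: p) = substPre (fun q => E (j :: q)) σ p := by
  unfold substPre
  have hlen : (j :: p).length = p.length + 1 := rfl
  rw [hlen, List.range_succ_eq_map, List.find?_cons_of_neg, List.find?_map]
  swap
  · simp [hroot]
  have hcomp : ((fun k => isVarLabel (E ((j :: p).take k))) ∘ Nat.succ)
      = fun k => isVarLabel ((fun q => E (j :: q)) (p.take k)) := by
    funext k; simp [List.take_succ_cons, Function.comp]
  rw [hcomp]
  rcases hf : List.find? (fun k => isVarLabel ((fun q => E (j :: q)) (p.take k)))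
      (List.range (p.length + 1)) with _ | k
  · simp
  · simp only [Option.map_some]
    simp [List.take_succ_cons, List.drop_succ_cons]

end SubstLemmas

section Main
variable {m : ℕ} {Act Γ : Type}

lemma Tpre_nil (Δ : Set (PRule (Fin m) Act Γ)) (p : Fin m) :
    Tpre Δ [] p = fun pos => if pos = [] then some (Sum.inl (Sum.inl p)) else none := rfl

lemma Tpre_cons_unstable (Δ : Set (PRule (Fin m) Act Γ)) {p : Fin m} {Y : Γ}
    (h : Unstable Δ p Y) (γ : List Γ) :
    Tpre Δ (Y :: γ) p = Tpre Δ γ h.choose.q := by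
  rw [Tpre]; exact dif_pos h

lemma Tpre_cons_stable (Δ : Set (PRule (Fin m) Act Γ)) {p : Fin m} {Y : Γ}
    (h : ¬ Unstable Δ p Y) (γ : List Γ) :
    Tpre Δ (Y :: γ) p = fun pos =>
      match pos with
      | [] => some (Sum.inl (Sum.inr (p, Y)))
      | j :: pos' => if hj : j < m then Tpre Δ γ ⟨j, hj⟩ pos' else none := by
  rw [Tpre]; exact dif_neg h

lemma Txpre_nil (Δ : Set (PRule (Fin m) Act Γ)) (p : Fin m) :
    Txpre Δ [] p = varPre p.val := rfl

lemma Txpre_cons_unstable (Δ : Set (PRule (Fin m) Act Γ)) {p : Fin m} {Y : Γ}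
    (h : Unstable Δ p Y) (γ : List Γ) :
    Txpre Δ (Y :: γ) p = Txpre Δ γ h.choose.q := by
  rw [Txpre]; exact dif_pos h

lemma Txpre_cons_stable (Δ : Set (PRule (Fin m) Act Γ)) {p : Fin m} {Y : Γ}
    (h : ¬ Unstable Δ p Y) (γ : List Γ) :
    Txpre Δ (Y :: γ) p = fun pos =>
      match pos with
      | [] => some (Sum.inl (Sum.inr (p, Y)))
      | j :: pos' => if hj : j < m then Txpre Δ γ ⟨j, hj⟩ pos' else none := by
  rw [Txpre]; exact dif_neg h

noncomputable def normC (Δ : Set (PRule (Fin m) Act Γ)) : List Γ → Fin m → Fin m × List Γ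
  | [], p => (p, [])
  | Y :: γ, p =>
    letI : Decidable (Unstable Δ p Y) := Classical.propDecidable _
    if h : Unstable Δ p Y then normC Δ γ h.choose.q else (p, Y :: γ)

lemma normC_nil (Δ : Set (PRule (Fin m) Act Γ)) (p : Fin m) : normC Δ [] p = (p, []) := rfl

lemma normC_cons_unstable (Δ : Set (PRule (Fin m) Act Γ)) {p : Fin m} {Y : Γ}
    (h : Unstable Δ p Y) (γ : List Γ) :
    normC Δ (Y :: γ) p = normC Δ γ h.choose.q := by
  rw [normC]; exact dif_pos h

lemma normC_cons_stable (Δ : Set (PRule (Fin m) Act Γ)) {p : Fin m} {Y : Γ}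
    (h : ¬ Unstable Δ p Y) (γ : List Γ) :
    normC Δ (Y :: γ) p = (p, Y :: γ) := by
  rw [normC]; exact dif_neg h

lemma Tc_norm (Δ : Set (PRule (Fin m) Act Γ)) :
    ∀ (γ : List Γ) (p : Fin m), Tpre Δ γ p = Tpre Δ (normC Δ γ p).2 (normC Δ γ p).1
  | [], p => by rw [normC_nil]
  | Y :: γ, p => by
    by_cases h : Unstable Δ p Y
    · rw [normC_cons_unstable Δ h, Tpre_cons_unstable Δ h, Tc_norm Δ γ]
    · rw [normC_cons_stable Δ h]

/-- `s` is stable -/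
def StableAt (Δ : Set (PRule (Fin m) Act Γ)) (s : Fin m × List Γ) : Prop :=
  ∀ (Y : Γ) (γ : List Γ), s.2 = Y :: γ → ¬ Unstable Δ s.1 Y

lemma normC_stable (Δ : Set (PRule (Fin m) Act Γ)) :
    ∀ (γ : List Γ) (p : Fin m), StableAt Δ (normC Δ γ p)
  | [], p => by rw [normC_nil]; intro Y γ h; exact absurd h (by simp)
  | Y :: γ, p => by
    by_cases h : Unstable Δ p Y
    · rw [normC_cons_unstable Δ h]; exact normC_stable Δ γ _
    · rw [normC_cons_stable Δ h]
      intro Y' γ' he hu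
      obtain ⟨rfl, rfl⟩ : Y' = Y ∧ γ' = γ := by
        simpa [eq_comm] using he
      exact h hu

/-- the substitution lemma: `T(qδx)σ = T(qδγ₀)` -/
lemma subst_Txpre (Δ : Set (PRule (Fin m) Act Γ)) (γ₀ : List Γ)
    (σ : ℕ → PreTerm (NtM m Γ))
    (hσ : ∀ (j : ℕ) (hj : j < m), σ j = Tpre Δ γ₀ ⟨j, hj⟩) :
    ∀ (δ : List Γ) (q : Fin m),
      substPre (Txpre Δ δ q) σ = Tpre Δ (δ ++ γ₀) q := by
  intro δ
  induction δ with
  | nil =>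
    intro q
    rw [Txpre_nil, substPre_varPre, hσ q.val q.isLt, Fin.eta, List.nil_append]
  | cons Y δ ih =>
    intro q
    by_cases h : Unstable Δ q Y
    · rw [Txpre_cons_unstable Δ h, ih, List.cons_append, Tpre_cons_unstable Δ h]
    · rw [Txpre_cons_stable Δ h, List.cons_append, Tpre_cons_stable Δ h]
      funext pos
      cases pos with
      | nil =>
        rw [substPre_root] <;> rfl
      | cons j pos' =>
        have hroot : isVarLabel ((fun pos =>
            match pos with
            | [] => some (Sum.inl (Sum.inr (q, Y)))
            | j :: pos' => if hj : j < m then Txpre Δ δ ⟨j, hj⟩ pos' else none :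
              PreTerm (NtM m Γ)) []) = false := rfl
        rw [substPre_child _ _ hroot]
        by_cases hj : j < m
        · have hchild : (fun q' => (fun pos =>
              match pos with
              | [] => some (Sum.inl (Sum.inr (q, Y)))
              | j :: pos' => if hj : j < m then Txpre Δ δ ⟨j, hj⟩ pos' else none :
                PreTerm (NtM m Γ)) (j :: q')) = Txpre Δ δ ⟨j, hj⟩ := by
            funext q'; simp [hj]
          rw [hchild, ih]
          simp [hj]
        · have hchild : (fun q' => (fun pos =>
              match pos with
              | [] => some (Sum.inl (Sum.inr (q, Y)))
              | j :: pos' => if hj : j < m then Txpre Δ δ ⟨j, hj⟩ pos' else none :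
                PreTerm (NtM m Γ)) (j :: q')) = fun _ => (none : Option (Sym (NtM m Γ))) := by
            funext q'; simp [hj]
          rw [hchild, substPre_none]
          simp [hj]

lemma Tpre_eq_headTerm (Δ : Set (PRule (Fin m) Act Γ)) {p : Fin m} {Y : Γ}
    (h : ¬ Unstable Δ p Y) (γ₀ : List Γ) :
    Tpre Δ (Y :: γ₀) p = headTerm (Sum.inr (p, Y) : NtM m Γ) m
      (fun j => if hj : j < m then Tpre Δ γ₀ ⟨j, hj⟩ else fun _ => none) := by
  rw [Tpre_cons_stable Δ h]
  funext pos
  cases pos with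
  | nil => rfl
  | cons j pos' =>
    by_cases hj : j < m <;> simp [headTerm, hj]

lemma choose_spec' {Δ : Set (PRule (Fin m) Act Γ)} {p : Fin m} {Y : Γ}
    (h : Unstable Δ p Y) :
    h.choose ∈ Δ ∧ h.choose.p = p ∧ h.choose.Y = Y ∧ h.choose.a = none := h.choose_spec

section Det

variable {Δ : Set (PRule (Fin m) Act Γ)}
  (hdet : ∀ r ∈ Δ, r.a = none →
      (∀ r' ∈ Δ, r'.p = r.p → r'.Y = r.Y → r' = r) ∧ r.out = [])

include hdet

lemma vis_stable {r : PRule (Fin m) Act Γ} (hr : r ∈ Δ) {a : Act}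
    (ha : r.a = some a) : ¬ Unstable Δ r.p r.Y := by
  rintro ⟨rε, hmem, hp, hY, hnone⟩
  have heq := (hdet rε hmem hnone).1 r hr hp.symm hY.symm
  rw [heq] at ha
  rw [hnone] at ha
  cases ha

lemma choose_eq {p : Fin m} {Y : Γ} (h : Unstable Δ p Y)
    {r : PRule (Fin m) Act Γ} (hr : r ∈ Δ) (hp : r.p = p) (hY : r.Y = Y)
    (ha : r.a = none) : h.choose = r := by
  obtain ⟨hm, hcp, hcY, hca⟩ := choose_spec' h
  exact (hdet r hr ha).1 h.choose hm (hcp.trans hp.symm) (hcY.trans hY.symm)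

lemma eps_to_norm : ∀ (γ : List Γ) (p : Fin m),
    Relation.ReflTransGen (pstep Δ none) (p, γ) (normC Δ γ p)
  | [], p => by rw [normC_nil]
  | Y :: γ, p => by
    by_cases h : Unstable Δ p Y
    · rw [normC_cons_unstable Δ h]
      obtain ⟨hm, hcp, hcY, hca⟩ := choose_spec' h
      have hout : h.choose.out = [] := (hdet h.choose hm hca).2
      refine Relation.ReflTransGen.head ?_ (eps_to_norm γ h.choose.q)
      exact ⟨h.choose, hm, hca, γ, by rw [hcp, hcY], by rw [hout]; rfl⟩
    · rw [normC_cons_stable Δ h]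

lemma eps_step_Tc {s s' : Fin m × List Γ} (h : pstep Δ none s s') :
    Tpre Δ s.2 s.1 = Tpre Δ s'.2 s'.1 := by
  obtain ⟨r, hr, ha, γ', hs, hs'⟩ := h
  have hu : Unstable Δ r.p r.Y := ⟨r, hr, rfl, rfl, ha⟩
  have hc : hu.choose = r := choose_eq hdet hu hr rfl rfl ha
  have hout : r.out = [] := (hdet r hr ha).2
  rw [hs, hs']
  simp only
  rw [Tpre_cons_unstable Δ hu, hc, hout, List.nil_append]

lemma eps_rtg_Tc {s s' : Fin m × List Γ}
    (h : Relation.ReflTransGen (pstep Δ none) s s') :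
    Tpre Δ s.2 s.1 = Tpre Δ s'.2 s'.1 := by
  induction h with
  | refl => rfl
  | tail _ h2 ih => exact ih.trans (eps_step_Tc hdet h2)

end Det

lemma gstep_encode (Δ : Set (PRule (Fin m) Act Γ)) {p : Fin m} {Y : Γ}
    (h : ¬ Unstable Δ p Y) {r : PRule (Fin m) Act Γ} (hr : r ∈ Δ) {a : Act}
    (ha : r.a = some a) (hp : r.p = p) (hY : r.Y = Y) (γ₀ : List Γ) :
    gstepP (GMpre Δ) a (Tpre Δ (Y :: γ₀) p) (Tpre Δ (r.out ++ γ₀) r.q) := by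
  refine ⟨⟨Sum.inr (p, Y), a, Txpre Δ r.out r.q⟩, ⟨r, hr, a, ha, by rw [hp, hY]; rfl⟩, rfl,
    fun j => if hj : j < m then Tpre Δ γ₀ ⟨j, hj⟩ else fun _ => none, ?_, ?_⟩
  · exact Tpre_eq_headTerm Δ h γ₀
  · refine (subst_Txpre Δ γ₀ _ ?_ r.out r.q).symm
    intro j hj
    simp [hj]

lemma gstep_decode (Δ : Set (PRule (Fin m) Act Γ)) {p : Fin m} {γ : List Γ}
    (hst : StableAt Δ (p, γ)) {a : Act} {E' : PreTerm (NtM m Γ)}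
    (h : gstepP (GMpre Δ) a (Tpre Δ γ p) E') :
    ∃ r ∈ Δ, r.a = some a ∧ r.p = p ∧ ∃ γ₀, γ = r.Y :: γ₀ ∧
      E' = Tpre Δ (r.out ++ γ₀) r.q := by
  obtain ⟨gr, hgr, hact, σ, hE, hE'⟩ := h
  obtain ⟨r, hr, a', ha', rfl⟩ := hgr
  simp only at hact
  subst hact
  cases γ with
  | nil =>
    exfalso
    have := congrFun hE []
    rw [Tpre_nil] at this
    simp [headTerm] at this
    cases this
  | cons Y γ₀ =>
    have hstu : ¬ Unstable Δ p Y := hst Y γ₀ rfl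
    have hroot := congrFun hE []
    rw [Tpre_cons_stable Δ hstu] at hroot
    simp only [headTerm] at hroot
    obtain ⟨hp, hY⟩ : p = r.p ∧ Y = r.Y := by
      have := Option.some.inj hroot
      have := Sum.inl.inj this
      have := Sum.inr.inj this
      exact ⟨congrArg Prod.fst this, congrArg Prod.snd this⟩
    have hσ : ∀ (j : ℕ) (hj : j < m), σ j = Tpre Δ γ₀ ⟨j, hj⟩ := by
      intro j hj
      funext pos'
      have := congrFun hE (j :: pos')
      rw [Tpre_cons_stable Δ hstu] at this
      simp only [headTerm] at this
      have har : (GMpre Δ).ar (Sum.inr (r.p, r.Y)) = m := rfl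
      rw [har] at this
      simp only [hj, dif_pos, if_pos] at this
      exact this.symm
    refine ⟨r, hr, ha', hp.symm, γ₀, by rw [hY], ?_⟩
    rw [hE']; exact subst_Txpre Δ γ₀ σ hσ r.out r.q


end Main

section Bisim
variable {A S : Type*}

lemma isBisim_Bisim (tr : A → S → S → Prop) : IsBisim tr (Bisim tr) := by
  rintro s t ⟨R, hR, hst⟩
  constructor
  · intro a s' h
    obtain ⟨t', ht', hR'⟩ := (hR s t hst).1 a s' h
    exact ⟨t', ht', R, hR, hR'⟩
  · intro a t' h
    obtain ⟨s', hs', hR'⟩ := (hR s t hst).2 a t' h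
    exact ⟨s', hs', R, hR, hR'⟩

lemma bisim_symm {tr : A → S → S → Prop} {s t : S} (h : Bisim tr s t) :
    Bisim tr t s := by
  obtain ⟨R, hR, hst⟩ := h
  refine ⟨fun x y => R y x, ?_, hst⟩
  intro x y hxy
  exact ⟨fun a x' hx => (hR y x hxy).2 a x' hx, fun a y' hy => (hR y x hxy).1 a y' hy⟩

lemma wstep_none {tr : Option A → S → S → Prop} :
    wstep tr none = Relation.ReflTransGen (tr none) := rfl

lemma isWeakBisim_WeakBisim (tr : Option A → S → S → Prop) :
    IsWeakBisim tr (WeakBisim tr) := by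
  rintro s t ⟨R, hR, hst⟩
  constructor
  · intro a s' h
    obtain ⟨t', ht', hR'⟩ := (hR s t hst).1 a s' h
    exact ⟨t', ht', R, hR, hR'⟩
  · intro a t' h
    obtain ⟨s', hs', hR'⟩ := (hR s t hst).2 a t' h
    exact ⟨s', hs', R, hR, hR'⟩

lemma weakBisim_symm {tr : Option A → S → S → Prop} {s t : S}
    (h : WeakBisim tr s t) : WeakBisim tr t s := by
  obtain ⟨R, hR, hst⟩ := h
  refine ⟨fun x y => R y x, ?_, hst⟩
  intro x y hxy
  exact ⟨fun a x' hx => (hR y x hxy).2 a x' hx, fun a y' hy => (hR y x hxy).1 a y' hy⟩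

lemma wb_eps {tr : Option A → S → S → Prop} {s s' t : S}
    (h : WeakBisim tr s t) (hs : Relation.ReflTransGen (tr none) s s') :
    ∃ t', Relation.ReflTransGen (tr none) t t' ∧ WeakBisim tr s' t' := by
  induction hs with
  | refl => exact ⟨t, Relation.ReflTransGen.refl, h⟩
  | tail _ h2 ih =>
    obtain ⟨t', ht', hwb⟩ := ih
    obtain ⟨t'', ht'', hwb'⟩ := (isWeakBisim_WeakBisim tr _ _ hwb).1 none _ h2
    exact ⟨t'', ht'.trans ht'', hwb'⟩

lemma wb_wstep {tr : Option A → S → S → Prop} {s s' t : S} {a : A}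
    (h : WeakBisim tr s t) (hs : wstep tr (some a) s s') :
    ∃ t', wstep tr (some a) t t' ∧ WeakBisim tr s' t' := by
  obtain ⟨u, v, h1, h2, h3⟩ := hs
  obtain ⟨t₁, ht₁, hwb₁⟩ := wb_eps h h1
  obtain ⟨t₂, ht₂, hwb₂⟩ := (isWeakBisim_WeakBisim tr _ _ hwb₁).1 (some a) v h2
  obtain ⟨t₃, ht₃, hwb₃⟩ := wb_eps hwb₂ h3
  obtain ⟨u', v', hu', hv', hw'⟩ := ht₂
  exact ⟨t₃, ⟨u', v', ht₁.trans hu', hv', hw'.trans ht₃⟩, hwb₃⟩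

end Bisim

section Transfer
variable {m : ℕ} {Act Γ : Type} {Δ : Set (PRule (Fin m) Act Γ)}
  (hdet : ∀ r ∈ Δ, r.a = none →
      (∀ r' ∈ Δ, r'.p = r.p → r'.Y = r.Y → r' = r) ∧ r.out = [])

include hdet

lemma transfer_g {s t : Fin m × List Γ} (hwb : WeakBisim (pstep Δ) s t)
    {a : Act} {E' : PreTerm (NtM m Γ)}
    (h : gstepP (GMpre Δ) a (Tpre Δ s.2 s.1) E') :
    ∃ F', gstepP (GMpre Δ) a (Tpre Δ t.2 t.1) F' ∧
      ∃ s' t', WeakBisim (pstep Δ) s' t' ∧ E' = Tpre Δ s'.2 s'.1 ∧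
        F' = Tpre Δ t'.2 t'.1 := by
  rw [Tc_norm Δ s.2 s.1] at h
  obtain ⟨r, hr, ha, hp, γ₀, hγ, hE'⟩ :=
    gstep_decode Δ (by rw [Prod.mk.eta]; exact normC_stable Δ s.2 s.1) h
  -- the weak a-step in the PDS from s
  have hu : normC Δ s.2 s.1 = (r.p, r.Y :: γ₀) := Prod.ext hp.symm hγ
  have hws : wstep (pstep Δ) (some a) s (r.q, r.out ++ γ₀) := by
    refine ⟨normC Δ s.2 s.1, (r.q, r.out ++ γ₀), ?_, ?_, Relation.ReflTransGen.refl⟩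
    · have := eps_to_norm hdet s.2 s.1
      rwa [Prod.mk.eta] at this
    · exact ⟨r, hr, ha, γ₀, hu, rfl⟩
  obtain ⟨t', hwt, hwb'⟩ := wb_wstep hwb hws
  obtain ⟨u₂, v, h1, h2, h3⟩ := hwt
  obtain ⟨r₂, hr₂, ha₂, δ, hu₂, hv⟩ := h2
  have hstable₂ : ¬ Unstable Δ r₂.p r₂.Y := vis_stable hdet hr₂ ha₂
  have hTct : Tpre Δ t.2 t.1 = Tpre Δ u₂.2 u₂.1 := eps_rtg_Tc hdet h1
  refine ⟨Tpre Δ (r₂.out ++ δ) r₂.q, ?_, (r.q, r.out ++ γ₀), t', hwb', hE', ?_⟩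
  · rw [hTct, hu₂]
    exact gstep_encode Δ hstable₂ hr₂ ha₂ rfl rfl δ
  · have h4 : Tpre Δ v.2 v.1 = Tpre Δ t'.2 t'.1 := eps_rtg_Tc hdet h3
    rw [← h4, hv]

lemma transfer_p {s t : Fin m × List Γ}
    (hb : Bisim (gstepP (GMpre Δ)) (Tpre Δ s.2 s.1) (Tpre Δ t.2 t.1))
    {a : Option Act} {s' : Fin m × List Γ} (h : pstep Δ a s s') :
    ∃ t', wstep (pstep Δ) a t t' ∧
      Bisim (gstepP (GMpre Δ)) (Tpre Δ s'.2 s'.1) (Tpre Δ t'.2 t'.1) := by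
  cases a with
  | none =>
    refine ⟨t, Relation.ReflTransGen.refl, ?_⟩
    rw [← eps_step_Tc hdet h]
    exact hb
  | some a =>
    obtain ⟨r, hr, ha, γ₁, hs, hs'⟩ := h
    have hstable : ¬ Unstable Δ r.p r.Y := vis_stable hdet hr ha
    have hg : gstepP (GMpre Δ) a (Tpre Δ s.2 s.1) (Tpre Δ s'.2 s'.1) := by
      rw [hs, hs']
      exact gstep_encode Δ hstable hr ha rfl rfl γ₁
    obtain ⟨F', hF', hb'⟩ := (isBisim_Bisim _ _ _ hb).1 a _ hg
    rw [Tc_norm Δ t.2 t.1] at hF'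
    obtain ⟨r₂, hr₂, ha₂, hp₂, δ, hγ₂, hEF⟩ :=
      gstep_decode Δ (by rw [Prod.mk.eta]; exact normC_stable Δ t.2 t.1) hF'
    refine ⟨(r₂.q, r₂.out ++ δ), ?_, ?_⟩
    · refine ⟨normC Δ t.2 t.1, (r₂.q, r₂.out ++ δ), ?_, ?_, Relation.ReflTransGen.refl⟩
      · have := eps_to_norm hdet t.2 t.1
        rwa [Prod.mk.eta] at this
      · exact ⟨r₂, hr₂, ha₂, δ, Prod.ext hp₂.symm hγ₂, rfl⟩
    · exact hEF ▸ hb'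

end Transfer

end PDSAux

open FOG PDS PDS2G in
/-- Let `M = (Q,Σ,Γ,Δ)` be a pushdown system whose `ε`-rules are
all deterministic and popping, with `Q = {q₁,…,q_m}`, and let `G_M` be the
first-order grammar obtained by the translation that preprocesses silent steps.
Then for all configurations: `pγ ≈ qγ'` in `L_M` iff `T(pγ) ∼ T(qγ')` in
`L_{G_M}`. -/
theorem pds_eps_to_grammar_correct (m : ℕ) (Act Γ : Type)
    (hAct : Finite Act) (hΓ : Finite Γ)
    (Δ : Set (PRule (Fin m) Act Γ)) (hΔ : Δ.Finite)
    (hdet : ∀ r ∈ Δ, r.a = none →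
      (∀ r' ∈ Δ, r'.p = r.p → r'.Y = r.Y → r' = r) ∧ r.out = []) :
    ∀ (p : Fin m) (γ : List Γ) (q : Fin m) (γ' : List Γ),
      WeakBisim (pstep Δ) (p, γ) (q, γ') ↔
      Bisim (gstepP (GMpre Δ)) (Tpre Δ γ p) (Tpre Δ γ' q) := by
  intro p γ q γ'
  constructor
  · intro h
    refine ⟨fun E F => ∃ s t : Fin m × List Γ, WeakBisim (pstep Δ) s t ∧
      E = Tpre Δ s.2 s.1 ∧ F = Tpre Δ t.2 t.1, ?_, (p, γ), (q, γ'), h, rfl, rfl⟩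
    rintro E F ⟨s, t, hwb, rfl, rfl⟩
    constructor
    · intro a E' hstep
      obtain ⟨F', hF', s', t', h3⟩ := PDSAux.transfer_g hdet hwb hstep
      exact ⟨F', hF', s', t', h3⟩
    · intro a F' hstep
      obtain ⟨E', hE', t', s', hwb', hF, hE⟩ :=
        PDSAux.transfer_g hdet (PDSAux.weakBisim_symm hwb) hstep
      exact ⟨E', hE', s', t', PDSAux.weakBisim_symm hwb', hE, hF⟩
  · intro h
    refine ⟨fun s t => Bisim (gstepP (GMpre Δ)) (Tpre Δ s.2 s.1) (Tpre Δ t.2 t.1), ?_, h⟩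
    rintro s t hb
    constructor
    · intro a s' hstep
      exact PDSAux.transfer_p hdet hb hstep
    · intro a t' hstep
      obtain ⟨s', hws, hb'⟩ := PDSAux.transfer_p hdet (PDSAux.bisim_symm hb) hstep
      exact ⟨s', hws, PDSAux.bisim_symm hb'⟩
end
end

section
/- Let G = (N, Σ, R) be a first-order grammar and M_G the pushdown system (with deterministic ε-rules) obtained by the standard translation using rhs-substitutions. Then for every nonterminal A ∈ N, the state A(x1,…,x_{ar(A)}) of L_G is weakly bisimilar to the state q1 A of L_{M_G} (in the disjoint union of the two labelled transition systems, where every transition of L_G is regarded as non-silent). -/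
open scoped ENat

noncomputable section

namespace G2PDS

open FOG PDS

/-- the root-substitution of a term with root arity `k`:
`σ(x_{j+1})` is the `j`-th child for `j < k`, and `σ(x) = x` otherwise -/
def rootSubst {Nt : Type} (E : PreTerm Nt) (k : ℕ) : ℕ → PreTerm Nt :=
  fun j => if j < k then subAt E [j] else varPre j

/-- `RSubs_G`: the rhs-substitutions for `G`, i.e. the root-substitutions of the
non-variable subterms of right-hand sides of rules of `G` -/
def RSubsSet (G : FOG.Grammar) : Set (ℕ → PreTerm G.Nt) :=
  {σ | ∃ r ∈ G.rules, ∃ (p : List ℕ) (A : G.Nt),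
    r.rhs p = some (Sum.inl A) ∧ σ = rootSubst (subAt r.rhs p) (G.ar A)}

/-- the number of control states: `m = max_{A ∈ N} ar(A)`, or `1` if `m = 0` -/
def mQ (G : FOG.Grammar) : ℕ := max (maxAr G) 1

/-- the stack alphabet `Γ = N ⊎ RSubs_G` -/
def ΓM (G : FOG.Grammar) : Type := G.Nt ⊕ {σ : ℕ → PreTerm G.Nt // σ ∈ RSubsSet G}

/-- the control state `q₁` -/
def q1 (G : FOG.Grammar) : Fin (mQ G) :=
  ⟨0, lt_of_lt_of_le one_pos (le_max_right (maxAr G) 1)⟩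

/-- The rules of the pushdown system `M_G`:
`q₁A →_a q_i` for each rule `A(x₁,…) →_a x_i`;
`q₁A →_a q₁Bσ` for each `σ ∈ RSubs_G` and rule `A(x₁,…) →_a B(x₁,…)σ`;
`q_iσ →_ε q_j` whenever `σ(x_i) = x_j`; and
`q_iσ →_ε q₁Cσ'` whenever `σ(x_i) = C(x₁,…)σ'` with `σ' ∈ RSubs_G`. -/
def ΔM (G : FOG.Grammar) : Set (PRule (Fin (mQ G)) G.Act (ΓM G)) :=
  {pr |
    (∃ r ∈ G.rules, ∃ (i : ℕ) (hi : i < mQ G),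
      r.rhs = varPre i ∧
      pr = ⟨q1 G, Sum.inl r.lhsA, some r.act, ⟨i, hi⟩, []⟩) ∨
    (∃ r ∈ G.rules, ∃ B : G.Nt,
      r.rhs [] = some (Sum.inl B) ∧
      ∃ hσ : rootSubst r.rhs (G.ar B) ∈ RSubsSet G,
      pr = ⟨q1 G, Sum.inl r.lhsA, some r.act, q1 G,
            [Sum.inl B, Sum.inr ⟨rootSubst r.rhs (G.ar B), hσ⟩]⟩) ∨
    (∃ (i : Fin (mQ G)) (σ : {σ : ℕ → PreTerm G.Nt // σ ∈ RSubsSet G})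
       (j : ℕ) (hj : j < mQ G),
      σ.val i.val = varPre j ∧
      pr = ⟨i, Sum.inr σ, none, ⟨j, hj⟩, []⟩) ∨
    (∃ (i : Fin (mQ G)) (σ : {σ : ℕ → PreTerm G.Nt // σ ∈ RSubsSet G}) (C : G.Nt),
      (σ.val i.val) [] = some (Sum.inl C) ∧
      ∃ hσ' : rootSubst (σ.val i.val) (G.ar C) ∈ RSubsSet G,
      pr = ⟨i, Sum.inr σ, none, q1 G,
            [Sum.inl C, Sum.inr ⟨rootSubst (σ.val i.val) (G.ar C), hσ'⟩]⟩)}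

end G2PDS

namespace StmtAux
open FOG PDS G2PDS

variable {Nt : Type}

theorem substPre_root_nonvar {E : PreTerm Nt} (h : isVarLabel (E []) = false) (τ : ℕ → PreTerm Nt) :
    substPre E τ [] = E [] := by
  simp [substPre, List.range_succ, List.find?, h]

theorem substPre_root_var {E : PreTerm Nt} {i : ℕ} (h : E [] = some (Sum.inr i))
    (τ : ℕ → PreTerm Nt) : substPre E τ = τ i := by
  funext p
  have h0 : isVarLabel (E (p.take 0)) = true := by simp [h, isVarLabel]
  simp only [substPre]
  rw [List.range_succ_eq_map, List.find?_cons_of_pos (by simpa using h0)]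
  simp [h]

theorem substPre_cons {E : PreTerm Nt} (h : isVarLabel (E []) = false) (τ : ℕ → PreTerm Nt)
    (j : ℕ) (p : List ℕ) : substPre E τ (j :: p) = substPre (subAt E [j]) τ p := by
  simp only [substPre, List.length_cons]
  rw [List.range_succ_eq_map, List.find?_cons_of_neg (by simpa using h), List.find?_map]
  have hagree : ((fun k => isVarLabel (E ((j :: p).take k))) ∘ Nat.succ)
      = fun (k : ℕ) => isVarLabel (subAt E [j] (p.take k)) := by
    funext k; simp [subAt, List.take_succ_cons]
  rw [hagree]
  cases hf : (List.range (p.length + 1)).find? (fun k => isVarLabel (subAt E [j] (p.take k))) with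
  | none => simp [subAt]
  | some k =>
    simp only [Option.map_some]
    have hE : E ((j :: p).take (k + 1)) = subAt E [j] (p.take k) := by
      simp [subAt, List.take_succ_cons]
    rw [hE]
    cases subAt E [j] (p.take k) with
    | none => rfl
    | some s => cases s with
      | inl A => rfl
      | inr i => simp [List.drop_succ_cons]

theorem substPre_none {E : PreTerm Nt} (h : ∀ p, E p = none) (τ : ℕ → PreTerm Nt) (p : List ℕ) :
    substPre E τ p = none := by
  simp only [substPre]
  rw [List.find?_eq_none.2 (by intro k _; simp [h, isVarLabel])]
  exact h p

theorem substPre_congr {E : PreTerm Nt} {σ σ' : ℕ → PreTerm Nt}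
    (h : ∀ i ∈ varsOf E, σ i = σ' i) : substPre E σ = substPre E σ' := by
  funext p
  simp only [substPre]
  cases hf : (List.range (p.length + 1)).find? (fun k => isVarLabel (E (p.take k))) with
  | none => rfl
  | some k =>
    cases hE : E (p.take k) with
    | none => simp [hE]
    | some s => cases s with
      | inl A => simp [hE]
      | inr i => simp [hE, h i ⟨p.take k, hE⟩]

end StmtAux
namespace StmtAux
open FOG PDS G2PDS

variable {Nt : Type}

theorem subAt_subAt (E : PreTerm Nt) (p q : List ℕ) :
    subAt (subAt E p) q = subAt E (p ++ q) := by
  funext r; simp [subAt, List.append_assoc]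

theorem isTerm_subAt {ar : Nt → ℕ} {E : PreTerm Nt} (hE : IsTerm ar E) {p : List ℕ}
    (hp : E p ≠ none) : IsTerm ar (subAt E p) := by
  constructor
  · simpa [subAt] using hp
  · intro q i
    have := hE.2 (p ++ q) i
    simpa [subAt, List.append_assoc] using this

theorem varsOf_subAt {E : PreTerm Nt} (p : List ℕ) : varsOf (subAt E p) ⊆ varsOf E := by
  rintro i ⟨q, hq⟩; exact ⟨p ++ q, hq⟩

/-- below a non-nonterminal (or out-of-arity) root child, everything is `none` -/
theorem allnone_of_bad_child {ar : Nt → ℕ} {E : PreTerm Nt} (hE : IsTerm ar E) {j : ℕ}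
    (h : ¬ ∃ A, E [] = some (Sum.inl A) ∧ j < ar A) (q : List ℕ) : E (j :: q) = none := by
  induction q using List.reverseRecOn with
  | nil =>
    by_contra hne
    exact h (by simpa using (hE.2 [] j).1 (by simpa using hne))
  | append_singleton q i ih =>
    by_contra hne
    have := (hE.2 (j :: q) i).1 (by simpa using hne)
    rw [ih] at this
    simp at this

theorem eq_varPre_of_root_var {ar : Nt → ℕ} {E : PreTerm Nt} (hE : IsTerm ar E) {i : ℕ}
    (h : E [] = some (Sum.inr i)) : E = varPre i := by
  funext p
  cases p with
  | nil => simp [varPre, h]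
  | cons j q =>
    rw [allnone_of_bad_child hE (by simp [h]) q]
    simp [varPre]

theorem isTerm_varPre (ar : Nt → ℕ) (i : ℕ) : IsTerm ar (varPre (Nt := Nt) i) := by
  constructor
  · simp [varPre]
  · intro p j
    constructor
    · intro hp; exfalso; apply hp; simp [varPre]
    · rintro ⟨A, hA, -⟩
      simp only [varPre] at hA
      split at hA <;> simp_all

/-- decomposition of substitution at a nonterminal-rooted term -/
theorem substPre_decomp {ar : Nt → ℕ} {E : PreTerm Nt} (hE : IsTerm ar E) {B : Nt}
    (h : E [] = some (Sum.inl B)) (τ : ℕ → PreTerm Nt) :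
    substPre E τ = headTerm B (ar B) (fun j => substPre (rootSubst E (ar B) j) τ) := by
  funext p
  cases p with
  | nil =>
    rw [substPre_root_nonvar (by simp [h, isVarLabel]) τ]
    simp [headTerm, h]
  | cons j q =>
    rw [substPre_cons (by simp [h, isVarLabel]) τ j q]
    by_cases hj : j < ar B
    · simp [headTerm, hj, rootSubst]
    · have hnone : ∀ r, subAt E [j] r = none := by
        intro r
        have hb : ¬ ∃ A, E [] = some (Sum.inl A) ∧ j < ar A := by
          rintro ⟨A, hA, hlt⟩
          rw [h] at hA
          cases hA
          exact hj hlt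
        simpa [subAt] using allnone_of_bad_child hE hb r
      rw [substPre_none hnone τ q]
      simp [headTerm, hj]

end StmtAux
namespace StmtAux
open FOG PDS G2PDS

variable {G : FOG.Grammar}

theorem ar_le_mQ (hG : G.WF) (A : G.Nt) : G.ar A ≤ mQ G := by
  have : Finite G.Nt := hG.1
  have h1 : G.ar A ≤ maxAr G :=
    le_csSup (Set.Finite.bddAbove (Set.finite_range G.ar)) ⟨A, rfl⟩
  exact le_trans h1 (le_max_left _ _)

theorem rhs_isTerm (hG : G.WF) {r : GRule G.Nt G.Act} (hr : r ∈ G.rules) :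
    IsTerm G.ar r.rhs := ((hG.2.2.2 r hr).1).1

theorem rhs_vars (hG : G.WF) {r : GRule G.Nt G.Act} (hr : r ∈ G.rules) :
    varsOf r.rhs ⊆ {i | i < G.ar r.lhsA} := (hG.2.2.2 r hr).2

theorem rootSubst_lt {Nt : Type} (E : PreTerm Nt) {k i : ℕ} (h : i < k) :
    rootSubst E k i = subAt E [i] := if_pos h

theorem rootSubst_ge {Nt : Type} (E : PreTerm Nt) {k i : ℕ} (h : ¬ i < k) :
    rootSubst E k i = varPre i := if_neg h

theorem rsubs_isTerm (hG : G.WF) {σ : ℕ → PreTerm G.Nt} (hσ : σ ∈ RSubsSet G) (i : ℕ) :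
    IsTerm G.ar (σ i) := by
  obtain ⟨r, hr, p, A, hpA, rfl⟩ := hσ
  have hterm : IsTerm G.ar r.rhs := rhs_isTerm hG hr
  by_cases hi : i < G.ar A
  · rw [rootSubst_lt _ hi, subAt_subAt]
    exact isTerm_subAt hterm ((hterm.2 p i).2 ⟨A, hpA, hi⟩)
  · rw [rootSubst_ge _ hi]; exact isTerm_varPre _ _

theorem rsubs_var_lt (hG : G.WF) {σ : ℕ → PreTerm G.Nt} (hσ : σ ∈ RSubsSet G) {i j : ℕ}
    (hi : i < mQ G) (h : σ i [] = some (Sum.inr j)) : j < mQ G := by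
  obtain ⟨r, hr, p, A, hpA, rfl⟩ := hσ
  by_cases hlt : i < G.ar A
  · rw [rootSubst_lt _ hlt, subAt_subAt] at h
    have hj : j ∈ varsOf r.rhs := ⟨(p ++ [i]) ++ [], h⟩
    exact lt_of_lt_of_le (rhs_vars hG hr hj) (ar_le_mQ hG _)
  · rw [rootSubst_ge _ hlt] at h
    simp only [varPre, if_pos trivial, Option.some.injEq, Sum.inr.injEq, eq_self_iff_true,
      reduceIte] at h
    omega

theorem rsubs_closed {σ : ℕ → PreTerm G.Nt} (hσ : σ ∈ RSubsSet G) {i : ℕ} {C : G.Nt}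
    (h : σ i [] = some (Sum.inl C)) : rootSubst (σ i) (G.ar C) ∈ RSubsSet G := by
  obtain ⟨r, hr, p, A, hpA, rfl⟩ := hσ
  by_cases hlt : i < G.ar A
  · have heq : rootSubst (subAt r.rhs p) (G.ar A) i = subAt r.rhs (p ++ [i]) := by
      rw [rootSubst_lt _ hlt, subAt_subAt]
    rw [heq] at h ⊢
    refine ⟨r, hr, p ++ [i], C, ?_, rfl⟩
    simpa [subAt] using h
  · rw [rootSubst_ge _ hlt] at h
    simp [varPre] at h

/-- decoding of a configuration of `M_G` into a term -/
def den (G : FOG.Grammar) : List (ΓM G) → ℕ → PreTerm G.Nt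
  | [], q => varPre q
  | Sum.inl A :: γ, _ => headTerm A (G.ar A) (fun j => den G γ j)
  | Sum.inr σ :: γ, q => substPre (σ.val q) (fun j => den G γ j)

/-- all stack symbols are substitutions -/
def AllSub (γ : List (ΓM G)) : Prop := ∀ x ∈ γ, ∃ σ, x = Sum.inr σ

def Good (G : FOG.Grammar) (q : Fin (mQ G)) (γ : List (ΓM G)) : Prop :=
  AllSub γ.tail ∧ ∀ A γ', γ = Sum.inl A :: γ' → q = q1 G

theorem good_of_allSub {q : Fin (mQ G)} {γ : List (ΓM G)} (h : AllSub γ) : Good G q γ := by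
  refine ⟨fun x hx => h x (List.mem_of_mem_tail hx), ?_⟩
  rintro A γ' rfl
  obtain ⟨σ, hσ⟩ := h (Sum.inl A) (List.mem_cons.2 (Or.inl rfl))
  exact (Sum.inl_ne_inr hσ).elim

end StmtAux
namespace StmtAux
open FOG PDS G2PDS

variable {G : FOG.Grammar}

theorem den_decomp_inr (hG : G.WF) (σ : {σ : ℕ → PreTerm G.Nt // σ ∈ RSubsSet G})
    (γ : List (ΓM G)) (q : ℕ) {C : G.Nt} (h : σ.val q [] = some (Sum.inl C))
    (hσ' : rootSubst (σ.val q) (G.ar C) ∈ RSubsSet G) :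
    den G (Sum.inr σ :: γ) q
      = den G (Sum.inl C :: Sum.inr ⟨rootSubst (σ.val q) (G.ar C), hσ'⟩ :: γ) 0 := by
  show substPre (σ.val q) (fun j => den G γ j) = _
  rw [substPre_decomp (rsubs_isTerm hG σ.2 q) h]
  rfl

/-- normalization: if a configuration denotes a nonterminal-rooted term, it can reach,
via silent steps, a configuration with that nonterminal on top and control `q₁`. -/
theorem norm (hG : G.WF) : ∀ (n : ℕ) (γ : List (ΓM G)), γ.length ≤ n →
    ∀ (q : Fin (mQ G)), Good G q γ → ∀ A : G.Nt, den G γ q.val [] = some (Sum.inl A) →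
    ∃ γ' : List (ΓM G), AllSub γ' ∧
      Relation.ReflTransGen (pstep (ΔM G) none) (q, γ) (q1 G, Sum.inl A :: γ') ∧
      den G γ q.val = den G (Sum.inl A :: γ') 0 := by
  intro n
  induction n with
  | zero =>
    intro γ hγ q _ A hroot
    have : γ = [] := List.length_eq_zero_iff.mp (Nat.le_zero.mp hγ)
    subst this
    simp [den, varPre] at hroot
  | succ n ih =>
    intro γ hγ q hGood A hroot
    match γ with
    | [] => simp [den, varPre] at hroot
    | Sum.inl B :: γ₀ =>
      have hq : q = q1 G := hGood.2 B γ₀ rfl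
      have hB : B = A := by
        have : den G (Sum.inl B :: γ₀) q.val [] = some (Sum.inl B) := rfl
        rw [hroot] at this
        exact (Sum.inl.injEq _ _ ▸ (Option.some.injEq _ _ ▸ this)).symm
      subst hq; subst hB
      exact ⟨γ₀, hGood.1, Relation.ReflTransGen.refl, rfl⟩
    | Sum.inr σ :: γ₀ =>
      have hAll₀ : AllSub γ₀ := hGood.1
      have hterm : IsTerm G.ar (σ.val q.val) := rsubs_isTerm hG σ.2 q.val
      have hden : den G (Sum.inr σ :: γ₀) q.val
          = substPre (σ.val q.val) (fun j => den G γ₀ j) := rfl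
      cases hr : σ.val q.val [] with
      | none => exact absurd hr hterm.1
      | some s =>
        cases s with
        | inr j =>
          -- σ(x_q) = x_j : pop
          have hvp : σ.val q.val = varPre j := eq_varPre_of_root_var hterm hr
          have hj : j < mQ G := rsubs_var_lt hG σ.2 q.isLt hr
          have hdeq : den G (Sum.inr σ :: γ₀) q.val = den G γ₀ j := by
            rw [hden, hvp, substPre_root_var (i := j) (by simp [varPre]) _]
          have hstep : pstep (ΔM G) none (q, Sum.inr σ :: γ₀) (⟨j, hj⟩, γ₀) := by
            refine ⟨⟨q, Sum.inr σ, none, ⟨j, hj⟩, []⟩, ?_, rfl, γ₀, rfl, rfl⟩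
            exact Or.inr (Or.inr (Or.inl ⟨q, σ, j, hj, hvp, rfl⟩))
          obtain ⟨γ', hAll', hsteps, hdeq'⟩ := ih γ₀ (by simpa using Nat.succ_le_succ_iff.mp hγ)
            ⟨j, hj⟩ (good_of_allSub hAll₀) A (by rw [← hdeq]; exact hroot)
          exact ⟨γ', hAll', Relation.ReflTransGen.head hstep hsteps, by rw [hdeq, hdeq']⟩
        | inl C =>
          -- σ(x_q) = C(…)σ' : push
          have hσ' : rootSubst (σ.val q.val) (G.ar C) ∈ RSubsSet G := rsubs_closed σ.2 hr
          have hdeq := den_decomp_inr hG σ γ₀ q.val hr hσ'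
          have hCA : C = A := by
            have h1 : den G (Sum.inl C :: Sum.inr ⟨_, hσ'⟩ :: γ₀) 0 [] = some (Sum.inl C) := rfl
            rw [← hdeq, hroot] at h1
            exact (Sum.inl.injEq _ _ ▸ (Option.some.injEq _ _ ▸ h1)).symm
          subst hCA
          have hstep : pstep (ΔM G) none (q, Sum.inr σ :: γ₀)
              (q1 G, Sum.inl C :: Sum.inr ⟨rootSubst (σ.val q.val) (G.ar C), hσ'⟩ :: γ₀) := by
            refine ⟨⟨q, Sum.inr σ, none, q1 G,
              [Sum.inl C, Sum.inr ⟨rootSubst (σ.val q.val) (G.ar C), hσ'⟩]⟩, ?_, rfl, γ₀, rfl, rfl⟩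
            exact Or.inr (Or.inr (Or.inr ⟨q, σ, C, hr, hσ', rfl⟩))
          refine ⟨Sum.inr ⟨rootSubst (σ.val q.val) (G.ar C), hσ'⟩ :: γ₀, ?_,
            Relation.ReflTransGen.single hstep, hdeq⟩
          rintro x hx
          rcases List.mem_cons.mp hx with rfl | hx
          · exact ⟨_, rfl⟩
          · exact hAll₀ x hx

end StmtAux
namespace StmtAux
open FOG PDS G2PDS

variable {G : FOG.Grammar}

/-- the sum LTS used in the main statement -/
abbrev SStep (G : FOG.Grammar) :=
  sumStep (liftTr (gstepP G)) (pstep (ΔM G))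

theorem lift_eps {c c' : Fin (mQ G) × List (ΓM G)}
    (h : Relation.ReflTransGen (pstep (ΔM G) none) c c') :
    Relation.ReflTransGen (SStep G none) (Sum.inr c) (Sum.inr c') :=
  by
    induction h with
    | refl => exact Relation.ReflTransGen.refl
    | tail _ hbc ih => exact ih.tail hbc

/-- the candidate weak bisimulation -/
def RR (G : FOG.Grammar) :
    (PreTerm G.Nt ⊕ Fin (mQ G) × List (ΓM G)) → (PreTerm G.Nt ⊕ Fin (mQ G) × List (ΓM G)) → Prop :=
  fun s t => ∃ (q : Fin (mQ G)) (γ : List (ΓM G)),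
    Good G q γ ∧ s = Sum.inl (den G γ q.val) ∧ t = Sum.inr (q, γ)

theorem RR_isWeakBisim (hG : G.WF) : IsWeakBisim (SStep G) (RR G) := by
  rintro s t ⟨q, γ, hGood, rfl, rfl⟩
  constructor
  · -- grammar side moves
    rintro a s' hstep
    cases s' with
    | inr c => exact hstep.elim
    | inl E' =>
      cases a with
      | none => exact hstep.elim
      | some a' =>
        obtain ⟨r, hr, hact, σ, hE, hE'⟩ := hstep
        subst hact
        have hroot : den G γ q.val [] = some (Sum.inl r.lhsA) := by rw [hE]; rfl
        obtain ⟨γ', hAll', hsteps, hdeq⟩ := norm hG γ.length γ le_rfl q hGood r.lhsA hroot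
        have hagree : ∀ i ∈ varsOf r.rhs, σ i = (fun j => den G γ' j) i := by
          intro i hi
          have hik : i < G.ar r.lhsA := rhs_vars hG hr hi
          funext p
          have h1 : headTerm r.lhsA (G.ar r.lhsA) σ (i :: p) = σ i p := by
            simp [headTerm, hik]
          have h2 : den G (Sum.inl r.lhsA :: γ') 0 (i :: p) = den G γ' i p := by
            show headTerm r.lhsA (G.ar r.lhsA) (fun j => den G γ' j) (i :: p) = _
            simp [headTerm, hik]
          rw [← h1, ← hE, hdeq, h2]
        have hE'2 : E' = substPre r.rhs (fun j => den G γ' j) := by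
          rw [hE']; exact substPre_congr hagree
        cases hr2 : r.rhs [] with
        | none => exact absurd hr2 (rhs_isTerm hG hr).1
        | some s0 =>
          cases s0 with
          | inr i =>
            have hvp : r.rhs = varPre i := eq_varPre_of_root_var (rhs_isTerm hG hr) hr2
            have hik : i < G.ar r.lhsA := rhs_vars hG hr ⟨[], hr2⟩
            have hi : i < mQ G := lt_of_lt_of_le hik (ar_le_mQ hG _)
            have hvis : pstep (ΔM G) (some r.act) (q1 G, Sum.inl r.lhsA :: γ') (⟨i, hi⟩, γ') := by
              refine ⟨⟨q1 G, Sum.inl r.lhsA, some r.act, ⟨i, hi⟩, []⟩, ?_, rfl, γ', rfl, rfl⟩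
              exact Or.inl ⟨r, hr, i, hi, hvp, rfl⟩
            refine ⟨Sum.inr (⟨i, hi⟩, γ'), ⟨Sum.inr (q1 G, Sum.inl r.lhsA :: γ'),
              Sum.inr (⟨i, hi⟩, γ'), lift_eps hsteps, hvis, Relation.ReflTransGen.refl⟩,
              ⟨⟨i, hi⟩, γ', good_of_allSub hAll', ?_, rfl⟩⟩
            rw [hE'2, hvp, substPre_root_var (i := i) (by simp [varPre]) _]
          | inl B =>
            have hσr : rootSubst r.rhs (G.ar B) ∈ RSubsSet G := ⟨r, hr, [], B, hr2, rfl⟩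
            have hvis : pstep (ΔM G) (some r.act) (q1 G, Sum.inl r.lhsA :: γ')
                (q1 G, Sum.inl B :: Sum.inr ⟨rootSubst r.rhs (G.ar B), hσr⟩ :: γ') := by
              refine ⟨⟨q1 G, Sum.inl r.lhsA, some r.act, q1 G,
                [Sum.inl B, Sum.inr ⟨rootSubst r.rhs (G.ar B), hσr⟩]⟩, ?_, rfl, γ', rfl, rfl⟩
              exact Or.inr (Or.inl ⟨r, hr, B, hr2, hσr, rfl⟩)
            refine ⟨Sum.inr (q1 G, Sum.inl B :: Sum.inr ⟨rootSubst r.rhs (G.ar B), hσr⟩ :: γ'),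
              ⟨Sum.inr (q1 G, Sum.inl r.lhsA :: γ'),
               Sum.inr (q1 G, Sum.inl B :: Sum.inr ⟨rootSubst r.rhs (G.ar B), hσr⟩ :: γ'),
               lift_eps hsteps, hvis, Relation.ReflTransGen.refl⟩,
              ⟨q1 G, Sum.inl B :: Sum.inr ⟨rootSubst r.rhs (G.ar B), hσr⟩ :: γ', ?_, ?_, rfl⟩⟩
            · refine ⟨?_, fun _ _ _ => rfl⟩
              rintro x hx
              rcases List.mem_cons.mp hx with rfl | hx
              · exact ⟨_, rfl⟩
              · exact hAll' x hx
            · rw [hE'2, substPre_decomp (rhs_isTerm hG hr) hr2]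
              rfl
  · -- PDS side moves
    rintro a t' hstep
    cases t' with
    | inl E' => exact hstep.elim
    | inr c =>
      obtain ⟨pr, hpr, hact, γ₀, hsrc, htgt⟩ := hstep
      have hq : q = pr.p := congrArg Prod.fst hsrc
      have hγ : γ = pr.Y :: γ₀ := congrArg Prod.snd hsrc
      rcases hpr with ⟨r, hr, i, hi, hvp, rfl⟩ | ⟨r, hr, B, hrB, hσr, rfl⟩ |
        ⟨i, σ, j, hj, hvar, rfl⟩ | ⟨i, σ, C, hrC, hσ', rfl⟩
      · -- q₁A →_a q_i
        subst hγ; subst hact; subst htgt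
        refine ⟨Sum.inl (den G γ₀ i), ?_, ⟨⟨i, hi⟩, γ₀, good_of_allSub hGood.1, rfl, rfl⟩⟩
        refine ⟨_, _, Relation.ReflTransGen.refl, ?_, Relation.ReflTransGen.refl⟩
        show gstepP G r.act (den G (Sum.inl r.lhsA :: γ₀) q.val) (den G γ₀ i)
        refine ⟨r, hr, rfl, fun j => den G γ₀ j, rfl, ?_⟩
        rw [hvp, substPre_root_var (i := i) (by simp [varPre]) _]
      · -- q₁A →_a q₁Bσ
        subst hγ; subst hact; subst htgt
        refine ⟨Sum.inl (den G (Sum.inl B :: Sum.inr ⟨rootSubst r.rhs (G.ar B), hσr⟩ :: γ₀) 0),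
          ?_, ⟨q1 G, Sum.inl B :: Sum.inr ⟨rootSubst r.rhs (G.ar B), hσr⟩ :: γ₀, ?_, rfl, rfl⟩⟩
        · refine ⟨_, _, Relation.ReflTransGen.refl, ?_, Relation.ReflTransGen.refl⟩
          show gstepP G r.act (den G (Sum.inl r.lhsA :: γ₀) q.val) _
          refine ⟨r, hr, rfl, fun j => den G γ₀ j, rfl, ?_⟩
          rw [substPre_decomp (rhs_isTerm hG hr) hrB]
          rfl
        · refine ⟨?_, fun _ _ _ => rfl⟩
          rintro x hx
          rcases List.mem_cons.mp hx with rfl | hx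
          · exact ⟨_, rfl⟩
          · exact hGood.1 x hx
      · -- q_iσ →_ε q_j
        subst hγ; subst hact; subst htgt
        obtain rfl : q = i := hq
        have hden : den G (Sum.inr σ :: γ₀) q.val = den G γ₀ j := by
          show substPre (σ.val q.val) (fun l => den G γ₀ l) = _
          rw [hvar, substPre_root_var (i := j) (by simp [varPre]) _]
        exact ⟨Sum.inl (den G (Sum.inr σ :: γ₀) q.val), Relation.ReflTransGen.refl,
          ⟨⟨j, hj⟩, γ₀, good_of_allSub hGood.1, by rw [hden], rfl⟩⟩
      · -- q_iσ →_ε q₁Cσ'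
        subst hγ; subst hact; subst htgt
        obtain rfl : q = i := hq
        have hden := den_decomp_inr hG σ γ₀ q.val hrC hσ'
        refine ⟨Sum.inl (den G (Sum.inr σ :: γ₀) q.val), Relation.ReflTransGen.refl,
          ⟨q1 G, Sum.inl C :: Sum.inr ⟨rootSubst (σ.val q.val) (G.ar C), hσ'⟩ :: γ₀,
            ?_, by rw [hden]; rfl, rfl⟩⟩
        refine ⟨?_, fun _ _ _ => rfl⟩
        rintro x hx
        rcases List.mem_cons.mp hx with rfl | hx
        · exact ⟨_, rfl⟩
        · exact hGood.1 x hx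

end StmtAux
open FOG PDS G2PDS in
/-- Let `G = (N,Σ,R)` be a first-order grammar and `M_G` the
pushdown system (whose `ε`-rules are deterministic) obtained by the standard
translation using rhs-substitutions.  Then for every nonterminal `A ∈ N` the state
`A(x₁,…,x_{ar(A)})` of `L_G` is weakly bisimilar to the state `q₁A` of `L_{M_G}`,
in the disjoint union of the two labelled transition systems (where every
transition of `L_G` is regarded as non-silent). -/
theorem grammar_to_pds_correct (G : FOG.Grammar) (hG : G.WF) (A : G.Nt) :
    WeakBisim (sumStep (liftTr (gstepP G)) (pstep (ΔM G)))
      (Sum.inl (headTerm A (G.ar A) varPre))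
      (Sum.inr (q1 G, [Sum.inl A])) := by
  refine ⟨StmtAux.RR G, StmtAux.RR_isWeakBisim hG,
    ⟨q1 G, [Sum.inl A], ⟨?_, fun _ _ _ => rfl⟩, rfl, rfl⟩⟩
  intro x hx
  cases hx
end
end
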